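/- arXiv:1401.1602 — 6 statements merged into one kernel-verified Lean document; each statement's English description precedes it below -/
import Mathlib

section
/- Let n ≥ 1, let A = (a_{i,j})_{i,j=1,…,n} be a real n×n matrix, and let f : [0,1)² → ℝ be the piecewise constant function with f(x,y) = a_{i,j} whenever (x,y) ∈ [(i−1)/n, i/n) × [(j−1)/n, j/n). Then for every copula measure μ on [0,1)², the integral ∫_{[0,1)²} f dμ is at most (1/n) · max over all permutations π of {1,…,n} of ∑_{i=1}^n a_{i,π(i)}. -/
open MeasureTheory Set

/-- A copula measure: a probability measure on the plane whose marginals are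
Lebesgue measure restricted to `[0,1)`. -/
def IsCopulaMeasure (μ : Measure (ℝ × ℝ)) : Prop :=
  IsProbabilityMeasure μ ∧
  μ.map Prod.fst = volume.restrict (Ico (0:ℝ) 1) ∧
  μ.map Prod.snd = volume.restrict (Ico (0:ℝ) 1)

/-- The half-open grid cell `[(i)/m, (i+1)/m) × [(j)/m, (j+1)/m)` (0-indexed). -/
def gridCell (m : ℕ) (i j : Fin m) : Set (ℝ × ℝ) :=
  Ico (((i : ℕ) : ℝ) / m) ((((i : ℕ) : ℝ) + 1) / m) ×ˢ
    Ico (((j : ℕ) : ℝ) / m) ((((j : ℕ) : ℝ) + 1) / m)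

/-- The closure of the grid cell. -/
def closedCell (m : ℕ) (i j : Fin m) : Set (ℝ × ℝ) :=
  Icc (((i : ℕ) : ℝ) / m) ((((i : ℕ) : ℝ) + 1) / m) ×ˢ
    Icc (((j : ℕ) : ℝ) / m) ((((j : ℕ) : ℝ) + 1) / m)

lemma idx_lt (n : ℕ) (hn : 1 ≤ n) {x : ℝ} (hx : x ∈ Ico (0:ℝ) 1) : ⌊x * n⌋₊ < n := by
  have hn0 : (0:ℝ) < n := by exact_mod_cast hn
  have h1 : x * n < n := by nlinarith [hx.1, hx.2]
  have h2 : (⌊x * n⌋₊ : ℝ) ≤ x * n := Nat.floor_le (by nlinarith [hx.1])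
  exact_mod_cast h2.trans_lt h1

lemma mem_Ico_floor (n : ℕ) (hn : 1 ≤ n) {x : ℝ} {i : ℕ} (hi : i < n) :
    x ∈ Ico ((i:ℝ)/n) (((i:ℝ)+1)/n) ↔ 0 ≤ x ∧ ⌊x * n⌋₊ = i := by
  have hn0 : (0:ℝ) < n := by exact_mod_cast hn
  constructor
  · rintro ⟨h1, h2⟩
    have hx0 : 0 ≤ x := le_trans (by positivity) h1
    refine ⟨hx0, ?_⟩
    rw [Nat.floor_eq_iff (by positivity)]
    constructor
    · calc (i:ℝ) = (i:ℝ)/n * n := by field_simp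
        _ ≤ x * n := by apply mul_le_mul_of_nonneg_right h1 hn0.le
    · calc x * n < ((i:ℝ)+1)/n * n := by apply mul_lt_mul_of_pos_right h2 hn0
        _ = (i:ℝ)+1 := by field_simp
  · rintro ⟨hx0, rfl⟩
    have h1 : (⌊x*n⌋₊ : ℝ) ≤ x * n := Nat.floor_le (by positivity)
    have h2 : x * n < (⌊x*n⌋₊ : ℝ) + 1 := Nat.lt_floor_add_one _
    constructor
    · rw [div_le_iff₀ hn0]; linarith
    · rw [lt_div_iff₀ hn0]; linarith

lemma mem_Ico01_of_mem (n : ℕ) (hn : 1 ≤ n) {x : ℝ} {i : Fin n}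
    (h : x ∈ Ico (((i:ℕ):ℝ)/n) ((((i:ℕ):ℝ)+1)/n)) : x ∈ Ico (0:ℝ) 1 := by
  have hn0 : (0:ℝ) < n := by exact_mod_cast hn
  have hi : ((i:ℕ):ℝ) + 1 ≤ n := by exact_mod_cast i.2
  constructor
  · exact le_trans (by positivity) h.1
  · calc x < (((i:ℕ):ℝ)+1)/n := h.2
      _ ≤ (n:ℝ) / n := by gcongr
      _ = 1 := by field_simp

lemma Ico01_eq_iUnion (n : ℕ) (hn : 1 ≤ n) :
    (⋃ i : Fin n, Ico (((i:ℕ):ℝ)/n) ((((i:ℕ):ℝ)+1)/n)) = Ico (0:ℝ) 1 := by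
  ext x
  simp only [mem_iUnion]
  constructor
  · rintro ⟨i, hi⟩; exact mem_Ico01_of_mem n hn hi
  · intro hx
    exact ⟨⟨⌊x*n⌋₊, idx_lt n hn hx⟩, (mem_Ico_floor n hn (idx_lt n hn hx)).2 ⟨hx.1, rfl⟩⟩

theorem stmt_0 (n : ℕ) (hn : 1 ≤ n) (a : Fin n → Fin n → ℝ) (f : ℝ × ℝ → ℝ)
    (hf : ∀ i j : Fin n, ∀ p ∈ gridCell n i j, f p = a i j)
    (μ : Measure (ℝ × ℝ)) (hμ : IsCopulaMeasure μ) :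
    ∫ p, f p ∂μ ≤ (1 / n : ℝ) * ⨆ π : Equiv.Perm (Fin n), ∑ i, a i (π i) := by
  obtain ⟨hprob, hfst, hsnd⟩ := hμ
  have hn0 : (0:ℝ) < n := by exact_mod_cast hn
  have hIm : ∀ i : Fin n, MeasurableSet (Ico (((i:ℕ):ℝ)/n) ((((i:ℕ):ℝ)+1)/n)) :=
    fun i => measurableSet_Ico
  have hcm : ∀ i j : Fin n, MeasurableSet (gridCell n i j) :=
    fun i j => (hIm i).prod (hIm j)
  -- a.e. membership in the unit square
  have hfst_ae : ∀ᵐ p ∂μ, p.1 ∈ Ico (0:ℝ) 1 := by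
    rw [ae_iff]
    have : {p : ℝ × ℝ | ¬ p.1 ∈ Ico (0:ℝ) 1} = Prod.fst ⁻¹' (Ico (0:ℝ) 1)ᶜ := rfl
    rw [this, ← Measure.map_apply measurable_fst measurableSet_Ico.compl, hfst,
      Measure.restrict_apply measurableSet_Ico.compl]
    simp
  have hsnd_ae : ∀ᵐ p ∂μ, p.2 ∈ Ico (0:ℝ) 1 := by
    rw [ae_iff]
    have : {p : ℝ × ℝ | ¬ p.2 ∈ Ico (0:ℝ) 1} = Prod.snd ⁻¹' (Ico (0:ℝ) 1)ᶜ := rfl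
    rw [this, ← Measure.map_apply measurable_snd measurableSet_Ico.compl, hsnd,
      Measure.restrict_apply measurableSet_Ico.compl]
    simp
  -- the weights
  set w : Fin n → Fin n → ℝ := fun i j => (μ (gridCell n i j)).toReal with hw
  have hwnn : ∀ i j, 0 ≤ w i j := fun i j => ENNReal.toReal_nonneg
  -- integral computation
  have hint : ∫ p, f p ∂μ = ∑ i, ∑ j, a i j * w i j := by
    have hae : f =ᵐ[μ] fun p => ∑ i, ∑ j, (gridCell n i j).indicator (fun _ => a i j) p := by
      filter_upwards [hfst_ae, hsnd_ae] with p h1 h2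
      set i0 : Fin n := ⟨⌊p.1*n⌋₊, idx_lt n hn h1⟩ with hi0
      set j0 : Fin n := ⟨⌊p.2*n⌋₊, idx_lt n hn h2⟩ with hj0
      have hp : p ∈ gridCell n i0 j0 :=
        ⟨(mem_Ico_floor n hn i0.2).2 ⟨h1.1, rfl⟩, (mem_Ico_floor n hn j0.2).2 ⟨h2.1, rfl⟩⟩
      rw [hf i0 j0 p hp]
      rw [Finset.sum_eq_single i0]
      · rw [Finset.sum_eq_single j0]
        · rw [Set.indicator_of_mem hp]
        · intro j _ hj
          apply Set.indicator_of_notMem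
          intro hpj
          exact hj (Fin.ext (((mem_Ico_floor n hn j.2).1 hpj.2).2.symm))
        · simp
      · intro i _ hi
        apply Finset.sum_eq_zero
        intro j _
        apply Set.indicator_of_notMem
        intro hpj
        exact hi (Fin.ext (((mem_Ico_floor n hn i.2).1 hpj.1).2.symm))
      · simp
    rw [integral_congr_ae hae]
    rw [integral_finset_sum _ (fun i _ => integrable_finset_sum _
      (fun j _ => (integrable_const (a i j)).indicator (hcm i j)))]
    · congr 1; ext i
      rw [integral_finset_sum _ (fun j _ => (integrable_const (a i j)).indicator (hcm i j))]
      congr 1; ext j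
      rw [integral_indicator_const _ (hcm i j)]
      simp [hw, mul_comm, Measure.real]
  -- row and column sums
  have hrowμ : ∀ i : Fin n, ∑ j, μ (gridCell n i j) = ENNReal.ofReal (1/n) := by
    intro i
    have hdisj : Pairwise (Function.onFun Disjoint (fun j : Fin n => gridCell n i j)) := by
      intro j j' hjj'
      apply Set.disjoint_left.2
      rintro p ⟨_, h2⟩ ⟨_, h4⟩
      exact hjj' (Fin.ext ((((mem_Ico_floor n hn j.2).1 h2).2.symm).trans
        ((mem_Ico_floor n hn j'.2).1 h4).2))
    rw [← tsum_fintype (L := SummationFilter.unconditional _), ← measure_iUnion hdisj (fun j => hcm i j)]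
    have hU : (⋃ j, gridCell n i j)
        = Ico (((i:ℕ):ℝ)/n) ((((i:ℕ):ℝ)+1)/n) ×ˢ Ico (0:ℝ) 1 := by
      ext p
      simp only [mem_iUnion, gridCell, Set.mem_prod]
      constructor
      · rintro ⟨j, h1, h2⟩; exact ⟨h1, mem_Ico01_of_mem n hn h2⟩
      · rintro ⟨h1, h2⟩
        exact ⟨⟨⌊p.2*n⌋₊, idx_lt n hn h2⟩, h1,
          (mem_Ico_floor n hn (idx_lt n hn h2)).2 ⟨h2.1, rfl⟩⟩
    rw [hU]
    have hsub : Ico (((i:ℕ):ℝ)/n) ((((i:ℕ):ℝ)+1)/n) ×ˢ Ico (0:ℝ) 1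
        = Prod.fst ⁻¹' Ico (((i:ℕ):ℝ)/n) ((((i:ℕ):ℝ)+1)/n)
          ∩ Prod.snd ⁻¹' Ico (0:ℝ) 1 := by
      ext p; simp [Set.mem_prod]
    rw [hsub]
    have hnull : μ (Prod.snd ⁻¹' Ico (0:ℝ) 1)ᶜ = 0 := by
      have : ((Prod.snd : ℝ × ℝ → ℝ) ⁻¹' Ico (0:ℝ) 1)ᶜ
          = (Prod.snd : ℝ × ℝ → ℝ) ⁻¹' (Ico (0:ℝ) 1)ᶜ := rfl
      rw [this, ← Measure.map_apply measurable_snd measurableSet_Ico.compl, hsnd,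
        Measure.restrict_apply measurableSet_Ico.compl]
      simp
    rw [measure_inter_conull hnull,
      ← Measure.map_apply measurable_fst (hIm i), hfst,
      Measure.restrict_apply (hIm i)]
    have : Ico (((i:ℕ):ℝ)/n) ((((i:ℕ):ℝ)+1)/n) ∩ Ico (0:ℝ) 1
        = Ico (((i:ℕ):ℝ)/n) ((((i:ℕ):ℝ)+1)/n) :=
      inter_eq_left.2 (fun x hx => mem_Ico01_of_mem n hn hx)
    rw [this, Real.volume_Ico]
    congr 1
    field_simp
    ring
  have hcolμ : ∀ j : Fin n, ∑ i, μ (gridCell n i j) = ENNReal.ofReal (1/n) := by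
    intro j
    have hdisj : Pairwise (Function.onFun Disjoint (fun i : Fin n => gridCell n i j)) := by
      intro i i' hii'
      apply Set.disjoint_left.2
      rintro p ⟨h2, _⟩ ⟨h4, _⟩
      exact hii' (Fin.ext ((((mem_Ico_floor n hn i.2).1 h2).2.symm).trans
        ((mem_Ico_floor n hn i'.2).1 h4).2))
    rw [← tsum_fintype (L := SummationFilter.unconditional _), ← measure_iUnion hdisj (fun i => hcm i j)]
    have hU : (⋃ i, gridCell n i j)
        = Ico (0:ℝ) 1 ×ˢ Ico (((j:ℕ):ℝ)/n) ((((j:ℕ):ℝ)+1)/n) := by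
      ext p
      simp only [mem_iUnion, gridCell, Set.mem_prod]
      constructor
      · rintro ⟨i, h1, h2⟩; exact ⟨mem_Ico01_of_mem n hn h1, h2⟩
      · rintro ⟨h1, h2⟩
        exact ⟨⟨⌊p.1*n⌋₊, idx_lt n hn h1⟩,
          (mem_Ico_floor n hn (idx_lt n hn h1)).2 ⟨h1.1, rfl⟩, h2⟩
    rw [hU]
    have hsub : Ico (0:ℝ) 1 ×ˢ Ico (((j:ℕ):ℝ)/n) ((((j:ℕ):ℝ)+1)/n)
        = Prod.snd ⁻¹' Ico (((j:ℕ):ℝ)/n) ((((j:ℕ):ℝ)+1)/n)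
          ∩ Prod.fst ⁻¹' Ico (0:ℝ) 1 := by
      ext p; simp only [Set.mem_prod, mem_inter_iff, mem_preimage]; tauto
    rw [hsub]
    have hnull : μ (Prod.fst ⁻¹' Ico (0:ℝ) 1)ᶜ = 0 := by
      have : ((Prod.fst : ℝ × ℝ → ℝ) ⁻¹' Ico (0:ℝ) 1)ᶜ
          = (Prod.fst : ℝ × ℝ → ℝ) ⁻¹' (Ico (0:ℝ) 1)ᶜ := rfl
      rw [this, ← Measure.map_apply measurable_fst measurableSet_Ico.compl, hfst,
        Measure.restrict_apply measurableSet_Ico.compl]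
      simp
    rw [measure_inter_conull hnull,
      ← Measure.map_apply measurable_snd (hIm j), hsnd,
      Measure.restrict_apply (hIm j)]
    have : Ico (((j:ℕ):ℝ)/n) ((((j:ℕ):ℝ)+1)/n) ∩ Ico (0:ℝ) 1
        = Ico (((j:ℕ):ℝ)/n) ((((j:ℕ):ℝ)+1)/n) :=
      inter_eq_left.2 (fun x hx => mem_Ico01_of_mem n hn hx)
    rw [this, Real.volume_Ico]
    congr 1
    field_simp
    ring
  have hrow : ∀ i : Fin n, ∑ j, w i j = 1/n := by
    intro i
    calc ∑ j, w i j = (∑ j, μ (gridCell n i j)).toReal :=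
          (ENNReal.toReal_sum (fun j _ => measure_ne_top μ _)).symm
      _ = (ENNReal.ofReal (1/n)).toReal := by rw [hrowμ i]
      _ = 1/n := ENNReal.toReal_ofReal (by positivity)
  have hcol : ∀ j : Fin n, ∑ i, w i j = 1/n := by
    intro j
    calc ∑ i, w i j = (∑ i, μ (gridCell n i j)).toReal :=
          (ENNReal.toReal_sum (fun i _ => measure_ne_top μ _)).symm
      _ = (ENNReal.ofReal (1/n)).toReal := by rw [hcolμ j]
      _ = 1/n := ENNReal.toReal_ofReal (by positivity)
  -- doubly stochastic matrix
  set M : Matrix (Fin n) (Fin n) ℝ := Matrix.of fun i j => (n:ℝ) * w i j with hM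
  have hMds : M ∈ doublyStochastic ℝ (Fin n) := by
    rw [mem_doublyStochastic_iff_sum]
    refine ⟨fun i j => mul_nonneg hn0.le (hwnn i j), fun i => ?_, fun j => ?_⟩
    · rw [show (∑ j, M i j) = (n:ℝ) * ∑ j, w i j by rw [Finset.mul_sum]; rfl, hrow]
      field_simp
    · rw [show (∑ i, M i j) = (n:ℝ) * ∑ i, w i j by rw [Finset.mul_sum]; rfl, hcol]
      field_simp
  obtain ⟨wt, hwt0, hwt1, hwtM⟩ := exists_eq_sum_perm_of_mem_doublyStochastic hMds
  have hperm : ∀ σ : Equiv.Perm (Fin n), ∑ i, ∑ j, a i j * (σ.permMatrix ℝ) i j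
      = ∑ i, a i (σ i) := by
    intro σ
    congr 1; ext i
    simp [Equiv.Perm.permMatrix, PEquiv.toMatrix_apply, Equiv.toPEquiv_apply]
  have hLM : ∑ i, ∑ j, a i j * M i j = ∑ σ : Equiv.Perm (Fin n), wt σ * ∑ i, a i (σ i) := by
    have hMij : ∀ i j, M i j = ∑ σ : Equiv.Perm (Fin n), wt σ * (σ.permMatrix ℝ) i j := by
      intro i j
      rw [← hwtM]
      simp only [Matrix.sum_apply, Matrix.smul_apply, smul_eq_mul]
    calc ∑ i, ∑ j, a i j * M i j
        = ∑ i, ∑ j, ∑ σ : Equiv.Perm (Fin n), wt σ * (a i j * (σ.permMatrix ℝ) i j) := by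
          simp_rw [hMij, Finset.mul_sum]; congr 1; ext i; congr 1; ext j
          congr 1; ext σ; ring
      _ = ∑ i, ∑ σ : Equiv.Perm (Fin n), ∑ j, wt σ * (a i j * (σ.permMatrix ℝ) i j) :=
          Finset.sum_congr rfl (fun i _ => Finset.sum_comm)
      _ = ∑ σ : Equiv.Perm (Fin n), ∑ i, ∑ j, wt σ * (a i j * (σ.permMatrix ℝ) i j) :=
          Finset.sum_comm
      _ = ∑ σ : Equiv.Perm (Fin n), wt σ * ∑ i, ∑ j, a i j * (σ.permMatrix ℝ) i j := by
          simp_rw [← Finset.mul_sum]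
      _ = ∑ σ : Equiv.Perm (Fin n), wt σ * ∑ i, a i (σ i) := by simp_rw [hperm]
  have hLMle : ∑ i, ∑ j, a i j * M i j ≤ ⨆ π : Equiv.Perm (Fin n), ∑ i, a i (π i) := by
    rw [hLM]
    calc ∑ σ : Equiv.Perm (Fin n), wt σ * ∑ i, a i (σ i)
        ≤ ∑ σ : Equiv.Perm (Fin n), wt σ * ⨆ π : Equiv.Perm (Fin n), ∑ i, a i (π i) := by
          apply Finset.sum_le_sum
          intro σ _
          exact mul_le_mul_of_nonneg_left
            (le_ciSup (f := fun π : Equiv.Perm (Fin n) => ∑ i, a i (π i))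
              (Set.finite_range _).bddAbove σ) (hwt0 σ)
      _ = ⨆ π : Equiv.Perm (Fin n), ∑ i, a i (π i) := by
          rw [← Finset.sum_mul, hwt1, one_mul]
  rw [hint]
  have : ∑ i, ∑ j, a i j * w i j = (1/n) * ∑ i, ∑ j, a i j * M i j := by
    rw [Finset.mul_sum]; congr 1; ext i
    rw [Finset.mul_sum]; congr 1; ext j
    show a i j * w i j = 1/n * (a i j * ((n:ℝ) * w i j))
    field_simp
  rw [this]
  exact mul_le_mul_of_nonneg_left hLMle (by positivity)
end

section
/- Let n ≥ 1, let A = (a_{i,j}) be a real n×n matrix, and let f be the piecewise constant function with matrix A on the uniform n×n grid. Then the supremum over all copula measures μ of ∫_{[0,1)²} f dμ equals (1/n) · max over all permutations π of {1,…,n} of ∑_{i=1}^n a_{i,π(i)}, and this supremum is attained (namely by the shuffle-of-M copula measure associated with a maximizing permutation π*). -/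
open MeasureTheory Set

def sub (n : ℕ) (i : Fin n) : Set ℝ := Ico (((i:ℕ):ℝ)/n) ((((i:ℕ):ℝ)+1)/n)

lemma gridCell_eq (n : ℕ) (i j : Fin n) : gridCell n i j = sub n i ×ˢ sub n j := rfl

lemma measurableSet_sub (n : ℕ) (i : Fin n) : MeasurableSet (sub n i) := measurableSet_Ico

lemma measurableSet_gridCell (n : ℕ) (i j : Fin n) : MeasurableSet (gridCell n i j) :=
  (measurableSet_sub n i).prod (measurableSet_sub n j)

variable {n : ℕ}


/-- The subinterval. -/


lemma npos (hn : 1 ≤ n) : (0:ℝ) < n := by exact_mod_cast hn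

lemma sub_subset (hn : 1 ≤ n) (i : Fin n) : sub n i ⊆ Ico (0:ℝ) 1 := by
  have hnp := npos hn
  intro x hx
  obtain ⟨h1, h2⟩ := hx
  constructor
  · exact le_trans (by positivity) h1
  · refine lt_of_lt_of_le h2 ?_
    rw [div_le_one hnp]
    have : (i:ℕ) + 1 ≤ n := i.2
    exact_mod_cast this

lemma sub_disjoint (hn : 1 ≤ n) {i j : Fin n} (hij : i ≠ j) : Disjoint (sub n i) (sub n j) := by
  have hnp := npos hn
  rw [sub, sub, Set.Ico_disjoint_Ico]
  rcases lt_or_gt_of_ne hij with h | h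
  · have : ((i:ℕ):ℝ) + 1 ≤ ((j:ℕ):ℝ) := by exact_mod_cast h
    calc min ((((i:ℕ):ℝ)+1)/n) ((((j:ℕ):ℝ)+1)/n) ≤ (((i:ℕ):ℝ)+1)/n := min_le_left _ _
    _ ≤ ((j:ℕ):ℝ)/n := by gcongr
    _ ≤ max _ _ := le_max_right _ _
  · have : ((j:ℕ):ℝ) + 1 ≤ ((i:ℕ):ℝ) := by exact_mod_cast h
    calc min ((((i:ℕ):ℝ)+1)/n) ((((j:ℕ):ℝ)+1)/n) ≤ (((j:ℕ):ℝ)+1)/n := min_le_right _ _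
    _ ≤ ((i:ℕ):ℝ)/n := by gcongr
    _ ≤ max _ _ := le_max_left _ _

lemma sub_union (hn : 1 ≤ n) : (⋃ i : Fin n, sub n i) = Ico (0:ℝ) 1 := by
  have hnp := npos hn
  apply Set.Subset.antisymm
  · exact Set.iUnion_subset fun i => sub_subset hn i
  · intro x hx
    obtain ⟨h0, h1⟩ := hx
    have hnx0 : (0:ℝ) ≤ n * x := by positivity
    set k := (⌊(n:ℝ) * x⌋).toNat with hk
    have hkf : ((k:ℤ):ℝ) = ((⌊(n:ℝ)*x⌋ : ℤ):ℝ) := by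
      rw [hk, Int.toNat_of_nonneg (Int.floor_nonneg.2 hnx0)]
    have hkle : (k:ℝ) ≤ n * x := by
      rw [show ((k:ℝ)) = ((k:ℤ):ℝ) by push_cast; ring, hkf]; exact Int.floor_le _
    have hklt : n * x < (k:ℝ) + 1 := by
      rw [show ((k:ℝ)) = ((k:ℤ):ℝ) by push_cast; ring, hkf]; exact Int.lt_floor_add_one _
    have hkn : k < n := by
      by_contra h
      push_neg at h
      have : (n:ℝ) ≤ k := by exact_mod_cast h
      have h2 : (n:ℝ) * x < n * 1 := by nlinarith
      linarith
    refine Set.mem_iUnion.2 ⟨⟨k, hkn⟩, ?_, ?_⟩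
    · simpa using (div_le_iff₀ hnp).2 (by simpa [mul_comm] using hkle)
    · simpa using (lt_div_iff₀ hnp).2 (by simpa [mul_comm] using hklt)

lemma sub_volume (hn : 1 ≤ n) (i : Fin n) : volume (sub n i) = ENNReal.ofReal (1/n) := by
  have hnp := npos hn
  rw [sub, Real.volume_Ico]
  congr 1
  field_simp
  ring

variable {μ : Measure (ℝ × ℝ)}

lemma copula_fst_null (hμ : IsCopulaMeasure μ) :
    μ {p : ℝ × ℝ | p.1 ∉ Ico (0:ℝ) 1} = 0 := by
  have : {p : ℝ × ℝ | p.1 ∉ Ico (0:ℝ) 1} = Prod.fst ⁻¹' (Ico (0:ℝ) 1)ᶜ := rfl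
  rw [this, ← Measure.map_apply measurable_fst measurableSet_Ico.compl, hμ.2.1,
    Measure.restrict_apply measurableSet_Ico.compl, Set.compl_inter_self, measure_empty]

lemma copula_snd_null (hμ : IsCopulaMeasure μ) :
    μ {p : ℝ × ℝ | p.2 ∉ Ico (0:ℝ) 1} = 0 := by
  have : {p : ℝ × ℝ | p.2 ∉ Ico (0:ℝ) 1} = Prod.snd ⁻¹' (Ico (0:ℝ) 1)ᶜ := rfl
  rw [this, ← Measure.map_apply measurable_snd measurableSet_Ico.compl, hμ.2.2,
    Measure.restrict_apply measurableSet_Ico.compl, Set.compl_inter_self, measure_empty]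

lemma copula_square (hμ : IsCopulaMeasure μ) :
    μ (Ico (0:ℝ) 1 ×ˢ Ico (0:ℝ) 1)ᶜ = 0 := by
  have hsub : (Ico (0:ℝ) 1 ×ˢ Ico (0:ℝ) 1)ᶜ ⊆
      {p : ℝ × ℝ | p.1 ∉ Ico (0:ℝ) 1} ∪ {p : ℝ × ℝ | p.2 ∉ Ico (0:ℝ) 1} := by
    intro p hp
    simp only [Set.mem_compl_iff, Set.mem_prod, not_and_or] at hp
    exact hp
  exact measure_mono_null hsub (le_antisymm
    ((measure_union_le _ _).trans (by rw [copula_fst_null hμ, copula_snd_null hμ]; simp))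
    zero_le)

lemma copula_strip_fst (hn : 1 ≤ n) (hμ : IsCopulaMeasure μ) (i : Fin n) :
    μ (Prod.fst ⁻¹' sub n i) = ENNReal.ofReal (1/n) := by
  rw [← Measure.map_apply measurable_fst (measurableSet_sub n i), hμ.2.1,
    Measure.restrict_apply (measurableSet_sub n i),
    Set.inter_eq_self_of_subset_left (sub_subset hn i), sub_volume hn i]

lemma copula_strip_snd (hn : 1 ≤ n) (hμ : IsCopulaMeasure μ) (j : Fin n) :
    μ (Prod.snd ⁻¹' sub n j) = ENNReal.ofReal (1/n) := by
  rw [← Measure.map_apply measurable_snd (measurableSet_sub n j), hμ.2.2,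
    Measure.restrict_apply (measurableSet_sub n j),
    Set.inter_eq_self_of_subset_left (sub_subset hn j), sub_volume hn j]

lemma copula_row_sum (hn : 1 ≤ n) (hμ : IsCopulaMeasure μ) (i : Fin n) :
    ∑ j : Fin n, μ (gridCell n i j) = ENNReal.ofReal (1/n) := by
  have h1 : (⋃ j : Fin n, gridCell n i j) = Prod.fst ⁻¹' sub n i ∩ Prod.snd ⁻¹' Ico (0:ℝ) 1 := by
    simp only [gridCell_eq, Set.prod_eq]
    rw [← Set.inter_iUnion, ← Set.preimage_iUnion, sub_union hn]
  have h2 : μ (⋃ j : Fin n, gridCell n i j) = ∑ j : Fin n, μ (gridCell n i j) := by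
    rw [measure_iUnion ?_ (fun j => measurableSet_gridCell n i j), tsum_fintype]
    intro j k hjk
    exact Set.disjoint_prod.2 (Or.inr (sub_disjoint hn hjk))
  rw [← h2, h1, measure_inter_conull ?_]
  · exact copula_strip_fst hn hμ i
  · exact copula_snd_null hμ

lemma copula_col_sum (hn : 1 ≤ n) (hμ : IsCopulaMeasure μ) (j : Fin n) :
    ∑ i : Fin n, μ (gridCell n i j) = ENNReal.ofReal (1/n) := by
  have h1 : (⋃ i : Fin n, gridCell n i j) = Prod.fst ⁻¹' Ico (0:ℝ) 1 ∩ Prod.snd ⁻¹' sub n j := by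
    simp only [gridCell_eq, Set.prod_eq]
    rw [← Set.iUnion_inter, ← Set.preimage_iUnion, sub_union hn]
  have h2 : μ (⋃ i : Fin n, gridCell n i j) = ∑ i : Fin n, μ (gridCell n i j) := by
    rw [measure_iUnion ?_ (fun i => measurableSet_gridCell n i j), tsum_fintype]
    intro i k hik
    exact Set.disjoint_prod.2 (Or.inl (sub_disjoint hn hik))
  rw [← h2, h1, Set.inter_comm, measure_inter_conull ?_]
  · exact copula_strip_snd hn hμ j
  · exact copula_fst_null hμ

lemma copula_integral (hn : 1 ≤ n) (hμ : IsCopulaMeasure μ) (a : Fin n → Fin n → ℝ)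
    (f : ℝ × ℝ → ℝ) (hf : ∀ i j : Fin n, ∀ p ∈ gridCell n i j, f p = a i j)
    (hsq : μ (Ico (0:ℝ) 1 ×ˢ Ico (0:ℝ) 1)ᶜ = 0) (hfin : ∀ s, μ s ≠ ⊤) :
    ∫ p, f p ∂μ = ∑ q : Fin n × Fin n, a q.1 q.2 * (μ (gridCell n q.1 q.2)).toReal := by
  set g : ℝ × ℝ → ℝ :=
    fun p => ∑ q : Fin n × Fin n, Set.indicator (gridCell n q.1 q.2) (fun _ => a q.1 q.2) p with hg
  have hae : f =ᵐ[μ] g := by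
    rw [Filter.EventuallyEq, ae_iff]
    refine measure_mono_null ?_ hsq
    intro p hp
    simp only [Set.mem_setOf_eq] at hp
    simp only [Set.mem_compl_iff]
    intro hpS
    apply hp
    obtain ⟨hp1, hp2⟩ := hpS
    rw [← sub_union hn] at hp1 hp2
    obtain ⟨i, hi⟩ := Set.mem_iUnion.1 hp1
    obtain ⟨j, hj⟩ := Set.mem_iUnion.1 hp2
    have hpc : p ∈ gridCell n i j := by rw [gridCell_eq]; exact ⟨hi, hj⟩
    rw [hf i j p hpc, hg]
    show _ = ∑ q : Fin n × Fin n, Set.indicator (gridCell n q.1 q.2) (fun _ => a q.1 q.2) p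
    rw [Finset.sum_eq_single_of_mem (i, j) (Finset.mem_univ _)]
    · rw [Set.indicator_of_mem hpc]
    · rintro ⟨i', j'⟩ - hne
      refine Set.indicator_of_notMem ?_ _
      rw [gridCell_eq]
      rintro ⟨hi', hj'⟩
      apply hne
      have hii : i' = i := by
        by_contra h
        exact (sub_disjoint hn h).ne_of_mem hi' hi rfl
      have hjj : j' = j := by
        by_contra h
        exact (sub_disjoint hn h).ne_of_mem hj' hj rfl
      rw [hii, hjj]
  rw [integral_congr_ae hae, hg]
  rw [integral_finset_sum]
  · refine Finset.sum_congr rfl fun q _ => ?_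
    rw [integral_indicator_const _ (measurableSet_gridCell n q.1 q.2), smul_eq_mul, mul_comm]
    rfl
  · intro q _
    rw [integrable_indicator_iff (measurableSet_gridCell n q.1 q.2)]
    exact integrableOn_const (hfin _)

lemma perm_sum_le_sup (a : Fin n → Fin n → ℝ) (σ : Equiv.Perm (Fin n)) :
    ∑ i, a i (σ i) ≤ ⨆ π : Equiv.Perm (Fin n), ∑ i, a i (π i) :=
  le_ciSup (f := fun π : Equiv.Perm (Fin n) => ∑ i, a i (π i)) (Set.Finite.bddAbove (Set.finite_range _)) σ

lemma linfun_permMatrix (a : Fin n → Fin n → ℝ) (σ : Equiv.Perm (Fin n)) :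
    ∑ q : Fin n × Fin n, a q.1 q.2 * (σ.permMatrix ℝ) q.1 q.2 = ∑ i, a i (σ i) := by
  rw [Fintype.sum_prod_type]
  refine Finset.sum_congr rfl fun i _ => ?_
  have hpm : ∀ j, (σ.permMatrix ℝ) i j = if σ i = j then (1:ℝ) else 0 := by
    intro j
    simp [Equiv.Perm.permMatrix, PEquiv.toMatrix_apply, Equiv.toPEquiv_apply]
  simp only [hpm, mul_ite, mul_one, mul_zero]
  simp

lemma sum_mul_le_sup (a : Fin n → Fin n → ℝ) (M : Matrix (Fin n) (Fin n) ℝ)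
    (hM : M ∈ doublyStochastic ℝ (Fin n)) :
    ∑ q : Fin n × Fin n, a q.1 q.2 * M q.1 q.2 ≤
      ⨆ π : Equiv.Perm (Fin n), ∑ i, a i (π i) := by
  obtain ⟨w, hw0, hw1, hwM⟩ := exists_eq_sum_perm_of_mem_doublyStochastic hM
  have key : ∑ q : Fin n × Fin n, a q.1 q.2 * M q.1 q.2 =
      ∑ σ : Equiv.Perm (Fin n), w σ * ∑ i, a i (σ i) := by
    rw [← hwM]
    have : ∀ q : Fin n × Fin n,
        a q.1 q.2 * (∑ σ : Equiv.Perm (Fin n), w σ • σ.permMatrix ℝ) q.1 q.2 =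
        ∑ σ : Equiv.Perm (Fin n), w σ * (a q.1 q.2 * (σ.permMatrix ℝ) q.1 q.2) := by
      intro q
      rw [Matrix.sum_apply]
      rw [Finset.mul_sum]
      refine Finset.sum_congr rfl fun σ _ => ?_
      rw [Matrix.smul_apply, smul_eq_mul]
      ring
    simp only [this]
    rw [Finset.sum_comm]
    refine Finset.sum_congr rfl fun σ _ => ?_
    rw [← Finset.mul_sum, linfun_permMatrix]
  rw [key]
  calc ∑ σ : Equiv.Perm (Fin n), w σ * ∑ i, a i (σ i)
      ≤ ∑ σ : Equiv.Perm (Fin n), w σ * ⨆ π : Equiv.Perm (Fin n), ∑ i, a i (π i) := by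
        refine Finset.sum_le_sum fun σ _ => ?_
        exact mul_le_mul_of_nonneg_left (perm_sum_le_sup a σ) (hw0 σ)
    _ = ⨆ π : Equiv.Perm (Fin n), ∑ i, a i (π i) := by
        rw [← Finset.sum_mul, hw1, one_mul]

lemma copula_matrix_mem (hn : 1 ≤ n) (hμ : IsCopulaMeasure μ) :
    (Matrix.of fun i j => (n:ℝ) * (μ (gridCell n i j)).toReal) ∈
      doublyStochastic ℝ (Fin n) := by
  have hnp := npos hn
  haveI : IsProbabilityMeasure μ := hμ.1
  have hfin : ∀ s, μ s ≠ ⊤ := fun s => (measure_lt_top μ s).ne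
  rw [mem_doublyStochastic_iff_sum]
  refine ⟨fun i j => mul_nonneg (by positivity) ENNReal.toReal_nonneg, fun i => ?_, fun j => ?_⟩
  · have hrow := copula_row_sum hn hμ i
    have : ∑ j, (μ (gridCell n i j)).toReal = 1/(n:ℝ) := by
      rw [← ENNReal.toReal_sum (fun j _ => hfin _), hrow, ENNReal.toReal_ofReal (by positivity)]
    simp only [Matrix.of_apply, ← Finset.mul_sum, this]
    field_simp
  · have hcol := copula_col_sum hn hμ j
    have : ∑ i, (μ (gridCell n i j)).toReal = 1/(n:ℝ) := by
      rw [← ENNReal.toReal_sum (fun i _ => hfin _), hcol, ENNReal.toReal_ofReal (by positivity)]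
    simp only [Matrix.of_apply, ← Finset.mul_sum, this]
    field_simp

lemma copula_integral_le (hn : 1 ≤ n) (hμ : IsCopulaMeasure μ) (a : Fin n → Fin n → ℝ)
    (f : ℝ × ℝ → ℝ) (hf : ∀ i j : Fin n, ∀ p ∈ gridCell n i j, f p = a i j) :
    ∫ p, f p ∂μ ≤ (1/n : ℝ) * ⨆ π : Equiv.Perm (Fin n), ∑ i, a i (π i) := by
  have hnp := npos hn
  haveI : IsProbabilityMeasure μ := hμ.1
  have hfin : ∀ s, μ s ≠ ⊤ := fun s => (measure_lt_top μ s).ne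
  rw [copula_integral hn hμ a f hf (copula_square hμ) hfin]
  have key : ∑ q : Fin n × Fin n, a q.1 q.2 * (μ (gridCell n q.1 q.2)).toReal =
      (1/n : ℝ) * ∑ q : Fin n × Fin n,
        a q.1 q.2 * (Matrix.of fun i j => (n:ℝ) * (μ (gridCell n i j)).toReal) q.1 q.2 := by
    rw [Finset.mul_sum]
    refine Finset.sum_congr rfl fun q _ => ?_
    rw [Matrix.of_apply]
    field_simp
  rw [key]
  exact mul_le_mul_of_nonneg_left
    (sum_mul_le_sup a _ (copula_matrix_mem hn hμ)) (by positivity)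

noncomputable def shuffleT (n : ℕ) (π : Equiv.Perm (Fin n)) : ℝ → ℝ :=
  fun x => x + ∑ i : Fin n,
    Set.indicator (sub n i) (fun _ => ((((π i : ℕ)):ℝ) - ((i:ℕ):ℝ))/n) x

lemma measurable_shuffleT (n : ℕ) (π : Equiv.Perm (Fin n)) : Measurable (shuffleT n π) :=
  measurable_id.add (Finset.measurable_sum _ fun i _ =>
    Measurable.indicator measurable_const (measurableSet_sub n i))

lemma shuffleT_eq (hn : 1 ≤ n) (π : Equiv.Perm (Fin n)) (i : Fin n) {x : ℝ}
    (hx : x ∈ sub n i) :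
    shuffleT n π x = x + ((((π i : ℕ)):ℝ) - ((i:ℕ):ℝ))/n := by
  rw [shuffleT]
  congr 1
  rw [Finset.sum_eq_single_of_mem i (Finset.mem_univ _)]
  · rw [Set.indicator_of_mem hx]
  · intro j _ hji
    exact Set.indicator_of_notMem (fun hxj => (sub_disjoint hn hji).ne_of_mem hxj hx rfl) _

lemma map_add_restrict_Ico (a b c : ℝ) :
    Measure.map (fun x => x + c) (volume.restrict (Ico a b)) =
      volume.restrict (Ico (a + c) (b + c)) := by
  ext s hs
  rw [Measure.map_apply (measurable_add_const c) hs, Measure.restrict_apply hs,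
    Measure.restrict_apply ((measurable_add_const c) hs)]
  have : (fun x => x + c) ⁻¹' s ∩ Ico a b = (fun x => x + c) ⁻¹' (s ∩ Ico (a+c) (b+c)) := by
    ext x
    simp only [Set.mem_inter_iff, Set.mem_preimage, Set.mem_Ico]
    constructor
    · rintro ⟨h1, h2, h3⟩; exact ⟨h1, by linarith, by linarith⟩
    · rintro ⟨h1, h2, h3⟩; exact ⟨h1, by linarith, by linarith⟩
  rw [this, measure_preimage_add_right]

lemma map_shuffleT (hn : 1 ≤ n) (π : Equiv.Perm (Fin n)) :
    Measure.map (shuffleT n π) (volume.restrict (Ico (0:ℝ) 1)) =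
      volume.restrict (Ico (0:ℝ) 1) := by
  have hnp := npos hn
  have hrestr : volume.restrict (Ico (0:ℝ) 1) =
      Measure.sum (fun i : Fin n => volume.restrict (sub n i)) := by
    rw [← sub_union hn, Measure.restrict_iUnion ?_ (measurableSet_sub n)]
    exact fun i j hij => sub_disjoint hn hij
  rw [hrestr, Measure.map_sum (measurable_shuffleT n π).aemeasurable]
  have heach : ∀ i : Fin n, Measure.map (shuffleT n π) (volume.restrict (sub n i)) =
      volume.restrict (sub n (π i)) := by
    intro i
    have hcongr : shuffleT n π =ᵐ[volume.restrict (sub n i)]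
        fun x => x + ((((π i : ℕ)):ℝ) - ((i:ℕ):ℝ))/n := by
      rw [Filter.EventuallyEq, ae_restrict_iff' (measurableSet_sub n i)]
      exact Filter.Eventually.of_forall fun x hx => shuffleT_eq hn π i hx
    rw [Measure.map_congr hcongr, sub, map_add_restrict_Ico, sub,
      show ((i:ℕ):ℝ)/n + ((((π i:ℕ)):ℝ) - ((i:ℕ):ℝ))/n = (((π i:ℕ)):ℝ)/n by ring,
      show (((i:ℕ):ℝ)+1)/n + ((((π i:ℕ)):ℝ) - ((i:ℕ):ℝ))/n = ((((π i:ℕ)):ℝ)+1)/n by ring]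
  simp only [heach]
  rw [Measure.sum_fintype, Measure.sum_fintype]
  exact Fintype.sum_equiv π _ _ fun i => rfl

noncomputable def shuffleMeasure (n : ℕ) (π : Equiv.Perm (Fin n)) : Measure (ℝ × ℝ) :=
  (volume.restrict (Ico (0:ℝ) 1)).map (fun x => (x, shuffleT n π x))

lemma measurable_pairT (n : ℕ) (π : Equiv.Perm (Fin n)) :
    Measurable (fun x : ℝ => (x, shuffleT n π x)) :=
  measurable_id.prodMk (measurable_shuffleT n π)

instance : IsProbabilityMeasure (volume.restrict (Ico (0:ℝ) 1)) := by
  constructor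
  rw [Measure.restrict_apply_univ, Real.volume_Ico]
  norm_num

lemma shuffle_copula (hn : 1 ≤ n) (π : Equiv.Perm (Fin n)) :
    IsCopulaMeasure (shuffleMeasure n π) := by
  refine ⟨?_, ?_, ?_⟩
  · exact Measure.isProbabilityMeasure_map (measurable_pairT n π).aemeasurable
  · rw [shuffleMeasure, Measure.map_map measurable_fst (measurable_pairT n π)]
    have : (Prod.fst ∘ fun x : ℝ => (x, shuffleT n π x)) = id := rfl
    rw [this, Measure.map_id]
  · rw [shuffleMeasure, Measure.map_map measurable_snd (measurable_pairT n π)]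
    have : (Prod.snd ∘ fun x : ℝ => (x, shuffleT n π x)) = shuffleT n π := rfl
    rw [this, map_shuffleT hn π]

lemma shuffleT_mem (hn : 1 ≤ n) (π : Equiv.Perm (Fin n)) (i : Fin n) {x : ℝ}
    (hx : x ∈ sub n i) : shuffleT n π x ∈ sub n (π i) := by
  have hnp := npos hn
  rw [shuffleT_eq hn π i hx]
  obtain ⟨h1, h2⟩ := hx
  constructor
  · have e1 : (((π i : ℕ)):ℝ)/n = ((i:ℕ):ℝ)/n + ((((π i : ℕ)):ℝ) - ((i:ℕ):ℝ))/n := by ring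
    rw [e1]; linarith
  · have e2 : ((((π i : ℕ)):ℝ)+1)/n =
      (((i:ℕ):ℝ)+1)/n + ((((π i : ℕ)):ℝ) - ((i:ℕ):ℝ))/n := by ring
    rw [e2]; linarith

lemma shuffle_cell (hn : 1 ≤ n) (π : Equiv.Perm (Fin n)) (i j : Fin n) :
    shuffleMeasure n π (gridCell n i j) =
      if j = π i then ENNReal.ofReal (1/n) else 0 := by
  rw [shuffleMeasure, Measure.map_apply (measurable_pairT n π) (measurableSet_gridCell n i j),
    Measure.restrict_apply ((measurable_pairT n π) (measurableSet_gridCell n i j))]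
  have hpre : (fun x : ℝ => (x, shuffleT n π x)) ⁻¹' gridCell n i j ∩ Ico (0:ℝ) 1 =
      if j = π i then sub n i else ∅ := by
    ext x
    simp only [Set.mem_inter_iff, Set.mem_preimage, gridCell_eq, Set.mem_prod]
    constructor
    · rintro ⟨⟨hxi, hxj⟩, -⟩
      have hmem := shuffleT_mem hn π i hxi
      have hji : j = π i := by
        by_contra h
        exact (sub_disjoint hn h).ne_of_mem hxj hmem rfl
      rw [if_pos hji]
      exact hxi
    · intro hx
      by_cases hji : j = π i
      · rw [if_pos hji] at hx
        refine ⟨⟨hx, ?_⟩, sub_subset hn i hx⟩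
        rw [hji]
        exact shuffleT_mem hn π i hx
      · rw [if_neg hji] at hx
        exact absurd hx (Set.notMem_empty x)
  rw [hpre]
  by_cases hji : j = π i
  · rw [if_pos hji, if_pos hji, sub_volume hn]
  · rw [if_neg hji, if_neg hji, measure_empty]

lemma shuffle_integral (hn : 1 ≤ n) (π : Equiv.Perm (Fin n)) (a : Fin n → Fin n → ℝ)
    (f : ℝ × ℝ → ℝ) (hf : ∀ i j : Fin n, ∀ p ∈ gridCell n i j, f p = a i j) :
    ∫ p, f p ∂(shuffleMeasure n π) = (1/n : ℝ) * ∑ i, a i (π i) := by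
  have hnp := npos hn
  have hcop := shuffle_copula hn π
  haveI : IsProbabilityMeasure (shuffleMeasure n π) := hcop.1
  rw [copula_integral hn hcop a f hf (copula_square hcop)
    (fun s => (measure_lt_top _ s).ne)]
  rw [Fintype.sum_prod_type]
  have hterm : ∀ i : Fin n, ∑ j : Fin n,
      a i j * (shuffleMeasure n π (gridCell n i j)).toReal = a i (π i) * (1/n : ℝ) := by
    intro i
    have : ∀ j : Fin n, a i j * (shuffleMeasure n π (gridCell n i j)).toReal =
        if j = π i then a i j * (1/n : ℝ) else 0 := by
      intro j
      rw [shuffle_cell hn π i j]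
      by_cases hji : j = π i
      · rw [if_pos hji, if_pos hji, ENNReal.toReal_ofReal (by positivity)]
      · rw [if_neg hji, if_neg hji, ENNReal.toReal_zero, mul_zero]
    simp only [this]
    rw [Finset.sum_ite_eq' Finset.univ (π i) (fun j => a i j * (1/n : ℝ))]
    rw [if_pos (Finset.mem_univ _)]
  simp only [hterm]
  rw [← Finset.sum_mul, mul_comm]

theorem stmt_2 (n : ℕ) (hn : 1 ≤ n) (a : Fin n → Fin n → ℝ) (f : ℝ × ℝ → ℝ)
    (hf : ∀ i j : Fin n, ∀ p ∈ gridCell n i j, f p = a i j) :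
    IsGreatest {x : ℝ | ∃ μ : Measure (ℝ × ℝ), IsCopulaMeasure μ ∧ x = ∫ p, f p ∂μ}
      ((1 / n : ℝ) * ⨆ π : Equiv.Perm (Fin n), ∑ i, a i (π i)) ∧
    ∃ (π' : Equiv.Perm (Fin n)) (T : ℝ → ℝ), Measurable T ∧
      (∀ i : Fin n, ∀ x ∈ Ico (((i : ℕ) : ℝ) / n) ((((i : ℕ) : ℝ) + 1) / n),
        T x = x + (((π' i : ℕ) : ℝ) - ((i : ℕ) : ℝ)) / n) ∧
      (∑ i, a i (π' i) = ⨆ π : Equiv.Perm (Fin n), ∑ i, a i (π i)) ∧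
      ∫ p, f p ∂((volume.restrict (Ico (0:ℝ) 1)).map (fun x => (x, T x))) =
        (1 / n : ℝ) * ⨆ π : Equiv.Perm (Fin n), ∑ i, a i (π i) := by
  have hnp := npos hn
  obtain ⟨π', hπ'⟩ := Finite.exists_max (fun π : Equiv.Perm (Fin n) => ∑ i, a i (π i))
  have hsup : ∑ i, a i (π' i) = ⨆ π : Equiv.Perm (Fin n), ∑ i, a i (π i) :=
    le_antisymm (perm_sum_le_sup a π') (ciSup_le hπ')
  constructor
  · constructor
    · refine ⟨shuffleMeasure n π', shuffle_copula hn π', ?_⟩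
      rw [shuffle_integral hn π' a f hf, hsup]
    · rintro x ⟨μ, hμ, rfl⟩
      exact copula_integral_le hn hμ a f hf
  · refine ⟨π', shuffleT n π', measurable_shuffleT n π', ?_, hsup, ?_⟩
    · intro i x hx
      exact shuffleT_eq hn π' i hx
    · show ∫ p, f p ∂(shuffleMeasure n π') = _
      rw [shuffle_integral hn π' a f hf, hsup]
end

section
/- Let n ≥ 1, let A = (a_{i,j}) be a real n×n matrix, and let D = (d_{i,j}) be a doubly stochastic n×n matrix (nonnegative entries, all row and column sums equal to 1). Then ∑_{i=1}^n ∑_{j=1}^n a_{i,j} d_{i,j} ≤ max over all permutations π of {1,…,n} of ∑_{i=1}^n a_{i,π(i)}. -/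
open MeasureTheory Set

theorem stmt_6 (n : ℕ) (hn : 1 ≤ n) (a d : Fin n → Fin n → ℝ)
    (hd0 : ∀ i j, 0 ≤ d i j) (hrow : ∀ i, ∑ j, d i j = 1) (hcol : ∀ j, ∑ i, d i j = 1) :
    ∑ i, ∑ j, a i j * d i j ≤ ⨆ π : Equiv.Perm (Fin n), ∑ i, a i (π i) := by
  have hM : (Matrix.of d) ∈ doublyStochastic ℝ (Fin n) :=
    mem_doublyStochastic_iff_sum.2 ⟨hd0, hrow, hcol⟩
  obtain ⟨w, hw0, hw1, hw2⟩ := exists_eq_sum_perm_of_mem_doublyStochastic hM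
  have hbdd : BddAbove (Set.range fun π : Equiv.Perm (Fin n) => ∑ i, a i (π i)) :=
    Set.Finite.bddAbove (Set.finite_range _)
  have key : ∀ i j, d i j = ∑ σ : Equiv.Perm (Fin n), w σ * (if σ i = j then (1:ℝ) else 0) := by
    intro i j
    have h := congrFun (congrFun hw2 i) j
    rw [Matrix.sum_apply] at h
    simpa [Equiv.Perm.permMatrix, PEquiv.toMatrix_apply, Equiv.toPEquiv_apply,
      Option.mem_def, mul_ite, mul_one, mul_zero] using h.symm
  have inner : ∀ i, ∑ j, a i j * d i j = ∑ σ : Equiv.Perm (Fin n), w σ * a i (σ i) := by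
    intro i
    simp_rw [key, Finset.mul_sum]
    rw [Finset.sum_comm]
    simp [mul_ite, mul_one, mul_zero, mul_comm, Finset.sum_ite_eq]
  calc ∑ i, ∑ j, a i j * d i j
      = ∑ i, ∑ σ : Equiv.Perm (Fin n), w σ * a i (σ i) :=
        Finset.sum_congr rfl fun i _ => inner i
    _ = ∑ σ : Equiv.Perm (Fin n), w σ * ∑ i, a i (σ i) := by
        rw [Finset.sum_comm]; simp [Finset.mul_sum]
    _ ≤ ∑ σ : Equiv.Perm (Fin n), w σ * ⨆ π : Equiv.Perm (Fin n), ∑ i, a i (π i) :=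
        Finset.sum_le_sum fun σ _ =>
          mul_le_mul_of_nonneg_left (le_ciSup hbdd σ) (hw0 σ)
    _ = ⨆ π : Equiv.Perm (Fin n), ∑ i, a i (π i) := by
        rw [← Finset.sum_mul, hw1, one_mul]
end

section
/- Define f' : [0,1) → [0,1] by f'(x) = 3/4 − x for x ∈ [0, 3/4) and f'(x) = x for x ∈ [3/4, 1), and let μ' be the pushforward of Lebesgue measure on [0,1) under the map x ↦ (x, f'(x)). Then μ' is a copula measure and ∫_{[0,1)²} sin(π(x + y)) dμ'(x,y) = ∫_0^1 sin(π(x + f'(x))) dx = 3/(4√2) − 1/(2π). In particular, sup over copula measures μ of ∫_{[0,1)²} sin(π(x+y)) dμ ≥ 3/(4√2) − 1/(2π). -/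
open MeasureTheory Set

/-- The support function of the shuffle of `M` with partition `(0, 3/4, 1)`,
antidiagonal on the first square and diagonal on the second. -/
noncomputable def fprime (x : ℝ) : ℝ := if x < 3 / 4 then 3 / 4 - x else x

lemma measurable_fprime : Measurable fprime :=
  Measurable.ite (measurableSet_lt measurable_id measurable_const)
    (measurable_const.sub measurable_id) measurable_id

lemma map_fprime :
    (volume.restrict (Ico (0:ℝ) 1)).map fprime = volume.restrict (Ico (0:ℝ) 1) := by
  ext A hA
  rw [Measure.map_apply measurable_fprime hA,
    Measure.restrict_apply (measurable_fprime hA), Measure.restrict_apply hA]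
  have hsplit : fprime ⁻¹' A ∩ Ico (0:ℝ) 1 =
      ((fun x : ℝ => 3/4 - x) ⁻¹' (A ∩ Ioc 0 (3/4))) ∪ (A ∩ Ico (3/4) 1) := by
    ext x
    simp only [mem_inter_iff, mem_preimage, mem_Ico, mem_Ioc, mem_union, fprime]
    by_cases h : x < 3/4
    · simp only [if_pos h]
      constructor
      · rintro ⟨hxA, hx0, _⟩
        exact Or.inl ⟨hxA, by linarith, by linarith⟩
      · rintro (⟨hxA, h1, h2⟩ | ⟨_, h1, _⟩)
        · exact ⟨hxA, by linarith, by linarith⟩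
        · linarith
    · simp only [if_neg h]
      push_neg at h
      constructor
      · rintro ⟨hxA, _, hx1⟩
        exact Or.inr ⟨hxA, h, hx1⟩
      · rintro (⟨_, h1, h2⟩ | ⟨hxA, _, hx1⟩)
        · linarith
        · exact ⟨hxA, by linarith, hx1⟩
  rw [hsplit]
  have hmp : MeasurePreserving (fun x : ℝ => 3/4 - x) volume volume := by
    have := (measurePreserving_add_left (volume : Measure ℝ) (3/4)).comp
      (Measure.measurePreserving_neg (volume : Measure ℝ))
    simpa [Function.comp_def, sub_eq_add_neg] using this
  have hdisj : Disjoint ((fun x : ℝ => 3/4 - x) ⁻¹' (A ∩ Ioc 0 (3/4))) (A ∩ Ico (3/4) 1) := by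
    refine Set.disjoint_left.2 fun x hx hx' => ?_
    have h1 : (0:ℝ) < 3/4 - x := hx.2.1
    have h2 : (3:ℝ)/4 ≤ x := hx'.2.1
    linarith
  rw [measure_union hdisj (hA.inter measurableSet_Ico),
    hmp.measure_preimage (hA.inter measurableSet_Ioc).nullMeasurableSet]
  have h1 : volume (A ∩ Ioc 0 (3/4)) = volume (A ∩ Ico 0 (3/4)) :=
    measure_congr ((Filter.EventuallyEq.refl _ A).inter
      (Ioc_ae_eq_Icc.trans Ico_ae_eq_Icc.symm))
  rw [h1, ← measure_union ?_ (hA.inter measurableSet_Ico), ← inter_union_distrib_left,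
    Ico_union_Ico_eq_Ico (by norm_num : (0:ℝ) ≤ 3/4) (by norm_num : (3:ℝ)/4 ≤ 1)]
  exact Set.disjoint_left.2 fun x hx hx' => absurd hx.2.2 (not_lt.2 hx'.2.1)

lemma measurable_g : Measurable (fun x : ℝ => Real.sin (Real.pi * (x + fprime x))) :=
  Real.measurable_sin.comp (measurable_const.mul (measurable_id.add measurable_fprime))

lemma integrableOn_g (s : Set ℝ) (hs : volume s ≠ ⊤) :
    IntegrableOn (fun x : ℝ => Real.sin (Real.pi * (x + fprime x))) s := by
  refine Measure.integrableOn_of_bounded (M := 1) hs measurable_g.aestronglyMeasurable ?_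
  filter_upwards with x
  rw [Real.norm_eq_abs, abs_le]
  exact ⟨Real.neg_one_le_sin _, Real.sin_le_one _⟩

lemma integral_g :
    ∫ x in Ico (0:ℝ) 1, Real.sin (Real.pi * (x + fprime x)) =
      3 / (4 * Real.sqrt 2) - 1 / (2 * Real.pi) := by
  have hsplit : Ico (0:ℝ) 1 = Ico 0 (3/4) ∪ Ico (3/4) 1 :=
    (Ico_union_Ico_eq_Ico (by norm_num) (by norm_num)).symm
  have hdisj : Disjoint (Ico (0:ℝ) (3/4)) (Ico (3/4:ℝ) 1) :=
    Set.disjoint_left.2 fun x hx hx' => absurd hx.2 (not_lt.2 hx'.1)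
  rw [hsplit, setIntegral_union hdisj measurableSet_Ico
    (integrableOn_g _ (by simp)) (integrableOn_g _ (by simp))]
  have h1 : ∫ x in Ico (0:ℝ) (3/4), Real.sin (Real.pi * (x + fprime x)) =
      3 / 4 * (Real.sqrt 2 / 2) := by
    rw [setIntegral_congr_fun measurableSet_Ico
      (fun x hx => show Real.sin (Real.pi * (x + fprime x)) = Real.sqrt 2 / 2 by
        have hfx : fprime x = 3/4 - x := if_pos hx.2
        have : Real.pi * (x + fprime x) = Real.pi - Real.pi / 4 := by rw [hfx]; ring
        rw [this, Real.sin_pi_sub, Real.sin_pi_div_four])]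
    rw [setIntegral_const]
    simp [Real.volume_Ico]
    norm_num
  have h2 : ∫ x in Ico ((3:ℝ)/4) 1, Real.sin (Real.pi * (x + fprime x)) =
      -(1 / (2 * Real.pi)) := by
    rw [setIntegral_congr_fun measurableSet_Ico
      (fun x hx => show Real.sin (Real.pi * (x + fprime x)) = Real.sin (2 * Real.pi * x) by
        have hfx : fprime x = x := if_neg (not_lt.2 hx.1)
        rw [hfx]; ring_nf)]
    rw [setIntegral_congr_set Ico_ae_eq_Ioc,
      ← intervalIntegral.integral_of_le (by norm_num : (3:ℝ)/4 ≤ 1)]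
    have := intervalIntegral.integral_comp_mul_left (a := (3:ℝ)/4) (b := 1)
      (fun y => Real.sin y) (c := 2 * Real.pi) (by positivity)
    have hc1 : Real.cos (2 * Real.pi * (3/4)) = 0 := by
      have h : 2 * Real.pi * (3/4) = Real.pi + Real.pi / 2 := by ring
      rw [h, Real.cos_add]
      simp [Real.cos_pi_div_two, Real.sin_pi]
    have hc2 : Real.cos (2 * Real.pi * 1) = 1 := by
      rw [mul_one, Real.cos_two_pi]
    rw [this, integral_sin, hc1, hc2, smul_eq_mul]
    have hpi := Real.pi_pos
    field_simp
    norm_num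
  rw [h1, h2]
  have hs2 : Real.sqrt 2 * Real.sqrt 2 = 2 := Real.mul_self_sqrt (by norm_num)
  have hs2pos : (0:ℝ) < Real.sqrt 2 := Real.sqrt_pos.2 (by norm_num)
  have key : 3 / 4 * (Real.sqrt 2 / 2) = 3 / (4 * Real.sqrt 2) := by
    rw [eq_div_iff (by positivity : (4:ℝ) * Real.sqrt 2 ≠ 0)]
    nlinarith [hs2]
  rw [key]; ring

lemma measurable_h : Measurable (fun x : ℝ => (x, fprime x)) :=
  measurable_id.prodMk measurable_fprime

lemma isCopula_mu' :
    IsCopulaMeasure ((volume.restrict (Ico (0:ℝ) 1)).map (fun x => (x, fprime x))) := by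
  have hprob0 : IsProbabilityMeasure (volume.restrict (Ico (0:ℝ) 1)) :=
    ⟨by simp [Real.volume_Ico]⟩
  refine ⟨Measure.isProbabilityMeasure_map measurable_h.aemeasurable, ?_, ?_⟩
  · rw [Measure.map_map measurable_fst measurable_h]
    have heq : (Prod.fst ∘ fun x : ℝ => (x, fprime x)) = id := rfl
    rw [heq, Measure.map_id]
  · rw [Measure.map_map measurable_snd measurable_h]
    exact map_fprime

lemma integral_map_eq :
    ∫ p, Real.sin (Real.pi * (p.1 + p.2))
        ∂((volume.restrict (Ico (0:ℝ) 1)).map (fun x => (x, fprime x))) =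
      ∫ x in Ico (0:ℝ) 1, Real.sin (Real.pi * (x + fprime x)) := by
  rw [integral_map measurable_h.aemeasurable
    (Continuous.aestronglyMeasurable (by continuity :
      Continuous fun p : ℝ × ℝ => Real.sin (Real.pi * (p.1 + p.2))))]

theorem stmt_14 :
    IsCopulaMeasure ((volume.restrict (Ico (0:ℝ) 1)).map (fun x => (x, fprime x))) ∧
    ∫ p, Real.sin (Real.pi * (p.1 + p.2))
        ∂((volume.restrict (Ico (0:ℝ) 1)).map (fun x => (x, fprime x))) =
      ∫ x in Ico (0:ℝ) 1, Real.sin (Real.pi * (x + fprime x)) ∧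
    ∫ x in Ico (0:ℝ) 1, Real.sin (Real.pi * (x + fprime x)) =
      3 / (4 * Real.sqrt 2) - 1 / (2 * Real.pi) ∧
    3 / (4 * Real.sqrt 2) - 1 / (2 * Real.pi) ≤
      sSup {x : ℝ | ∃ μ : Measure (ℝ × ℝ), IsCopulaMeasure μ ∧
        x = ∫ p, Real.sin (Real.pi * (p.1 + p.2)) ∂μ} := by
  refine ⟨isCopula_mu', integral_map_eq, integral_g, ?_⟩
  have hbdd : BddAbove {x : ℝ | ∃ μ : Measure (ℝ × ℝ), IsCopulaMeasure μ ∧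
      x = ∫ p, Real.sin (Real.pi * (p.1 + p.2)) ∂μ} := by
    refine ⟨1, fun y hy => ?_⟩
    obtain ⟨μ, ⟨hp, -, -⟩, rfl⟩ := hy
    haveI := hp
    calc ∫ p, Real.sin (Real.pi * (p.1 + p.2)) ∂μ
        ≤ |∫ p, Real.sin (Real.pi * (p.1 + p.2)) ∂μ| := le_abs_self _
      _ ≤ 1 * (μ univ).toReal := by
          rw [← Real.norm_eq_abs]
          refine norm_integral_le_of_norm_le_const ?_
          filter_upwards with p
          rw [Real.norm_eq_abs, abs_le]
          exact ⟨Real.neg_one_le_sin _, Real.sin_le_one _⟩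
      _ = 1 := by simp
  refine le_csSup hbdd ?_
  exact ⟨_, isCopula_mu', (integral_map_eq.trans integral_g).symm⟩
end

section
/- Let (x_k)_{k≥1} be a uniformly distributed sequence in [0,1), i.e., for every 0 ≤ a ≤ b ≤ 1 the averages (1/N) ∑_{k=1}^N 1_{[a,b)}(x_k) converge to b − a as N → ∞. Let n ≥ 1, let π be a permutation of {1,…,n}, and let T_π : [0,1) → [0,1) be the shuffle map defined by T_π(x) = x + (π(i) − i)/n for x ∈ [(i−1)/n, i/n). Then the sequence (T_π(x_k))_{k≥1} is also uniformly distributed in [0,1). -/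
open MeasureTheory Set

lemma clamp_ident (a b A B : ℝ) (hab : a ≤ b) (hAB : A ≤ B) :
    max 0 (min B b - max A a) = min b (max a B) - min b (max a A) := by
  simp only [min_def, max_def]
  split_ifs <;> linarith

theorem stmt_15 (x : ℕ → ℝ) (hx : ∀ k, x k ∈ Ico (0:ℝ) 1)
    (hud : ∀ a b : ℝ, 0 ≤ a → a ≤ b → b ≤ 1 →
      Filter.Tendsto
        (fun N : ℕ => (1 / (N : ℝ)) * ∑ k ∈ Finset.range N, (Ico a b).indicator (fun _ => (1:ℝ)) (x k))
        Filter.atTop (nhds (b - a)))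
    (n : ℕ) (hn : 1 ≤ n) (π : Equiv.Perm (Fin n)) (T : ℝ → ℝ)
    (hTdef : ∀ i : Fin n, ∀ y ∈ Ico (((i : ℕ) : ℝ) / n) ((((i : ℕ) : ℝ) + 1) / n),
      T y = y + (((π i : ℕ) : ℝ) - ((i : ℕ) : ℝ)) / n) :
    ∀ a b : ℝ, 0 ≤ a → a ≤ b → b ≤ 1 →
      Filter.Tendsto
        (fun N : ℕ => (1 / (N : ℝ)) * ∑ k ∈ Finset.range N, (Ico a b).indicator (fun _ => (1:ℝ)) (T (x k)))
        Filter.atTop (nhds (b - a)) := by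
  intro a b ha hab hb
  have hn0 : (0:ℝ) < n := by exact_mod_cast hn
  have hnne : (n:ℝ) ≠ 0 := ne_of_gt hn0
  set c : Fin n → ℝ := fun i => (((π i : ℕ) : ℝ) - ((i : ℕ) : ℝ)) / n with hc
  set L : Fin n → ℝ := fun i => max (((i:ℕ):ℝ)/n) (a - c i) with hL
  set H : Fin n → ℝ := fun i => min ((((i:ℕ):ℝ)+1)/n) (b - c i) with hH
  set lo : Fin n → ℝ := fun i => min 1 (L i) with hlo
  set hi : Fin n → ℝ := fun i => max (lo i) (H i) with hhi
  -- basic cell facts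
  have hcell_up : ∀ i : Fin n, (((i:ℕ):ℝ)+1)/n ≤ 1 := by
    intro i
    rw [div_le_one hn0]
    have : (i:ℕ) + 1 ≤ n := i.2
    exact_mod_cast this
  have hcell_lo : ∀ i : Fin n, 0 ≤ ((i:ℕ):ℝ)/n := by
    intro i; positivity
  have hlo0 : ∀ i, 0 ≤ lo i := by
    intro i
    exact le_min zero_le_one (le_trans (hcell_lo i) (le_max_left _ _))
  have hlohi : ∀ i, lo i ≤ hi i := fun i => le_max_left _ _
  have hhi1 : ∀ i, hi i ≤ 1 := by
    intro i
    exact max_le (min_le_left _ _) (le_trans (min_le_left _ _) (hcell_up i))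
  -- pointwise identity
  have hptwise : ∀ y ∈ Ico (0:ℝ) 1,
      (Ico a b).indicator (fun _ => (1:ℝ)) (T y)
        = ∑ i : Fin n, (Ico (lo i) (hi i)).indicator (fun _ => (1:ℝ)) y := by
    intro y hy
    obtain ⟨hy0, hy1⟩ := hy
    have hyn0 : (0:ℝ) ≤ y * n := by positivity
    have hyn1 : y * n < n := by
      calc y * n < 1 * n := by apply mul_lt_mul_of_pos_right hy1 hn0
      _ = n := one_mul _
    set m : ℕ := ⌊y * n⌋.toNat with hm
    have hfl0 : (0:ℤ) ≤ ⌊y * n⌋ := Int.floor_nonneg.mpr hyn0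
    have hmR : ((m:ℕ):ℝ) = ((⌊y * n⌋ : ℤ) : ℝ) := by
      rw [hm]
      exact_mod_cast congrArg (fun z : ℤ => (z:ℝ)) (Int.toNat_of_nonneg hfl0)
    have hmle : (m:ℝ) ≤ y * n := by rw [hmR]; exact Int.floor_le _
    have hmgt : y * n < (m:ℝ) + 1 := by rw [hmR]; exact Int.lt_floor_add_one _
    have hmn : m < n := by
      have : (m:ℝ) < n := lt_of_le_of_lt hmle hyn1
      exact_mod_cast this
    set i : Fin n := ⟨m, hmn⟩ with hi_def
    have hcl : ((i:ℕ):ℝ)/n ≤ y := by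
      rw [div_le_iff₀ hn0]; exact hmle
    have hcu : y < (((i:ℕ):ℝ)+1)/n := by
      rw [lt_div_iff₀ hn0]; exact hmgt
    have hTy : T y = y + c i := hTdef i y ⟨hcl, hcu⟩
    rw [Finset.sum_eq_single i]
    · -- main term
      have hiff : T y ∈ Ico a b ↔ y ∈ Ico (lo i) (hi i) := by
        rw [hTy]
        constructor
        · rintro ⟨h1, h2⟩
          constructor
          · exact le_trans (min_le_right _ _) (max_le hcl (by linarith))
          · exact lt_of_lt_of_le (lt_min hcu (by linarith)) (le_max_right _ _)
        · rintro ⟨h1, h2⟩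
          have hloL : lo i = L i := by
            rcases le_or_gt (L i) 1 with h | h
            · exact min_eq_right h
            · exfalso
              have : lo i = 1 := min_eq_left h.le
              rw [this] at h1; linarith
          have hyH : y < H i := by
            by_contra hcon
            push_neg at hcon
            have : hi i ≤ y := max_le h1 hcon
            linarith
          have hyL : L i ≤ y := by rw [← hloL]; exact h1
          constructor
          · have := le_trans (le_max_right (((i:ℕ):ℝ)/n) (a - c i)) hyL
            linarith
          · have := lt_of_lt_of_le hyH (min_le_right _ _)
            linarith
      by_cases hmem : y ∈ Ico (lo i) (hi i)
      · rw [Set.indicator_of_mem (hiff.mpr hmem), Set.indicator_of_mem hmem]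
      · rw [Set.indicator_of_notMem (fun h => hmem (hiff.mp h)),
          Set.indicator_of_notMem hmem]
    · -- other terms vanish
      intro j _ hji
      rw [Set.indicator_of_notMem]
      rintro ⟨h1, h2⟩
      have hhij : lo j < hi j := lt_of_le_of_lt h1 h2
      have hhiH : hi j = H j := by
        rcases le_or_gt (H j) (lo j) with h | h
        · exfalso
          have : hi j = lo j := max_eq_left h
          rw [this] at hhij; exact lt_irrefl _ hhij
        · exact max_eq_right h.le
      have hjl : ((j:ℕ):ℝ)/n ≤ y := by
        have hLlo : ((j:ℕ):ℝ)/n ≤ lo j := by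
          apply le_min
          · rw [div_le_one hn0]
            have : (j:ℕ) ≤ n := j.2.le
            exact_mod_cast this
          · exact le_max_left _ _
        linarith
      have hju : y < (((j:ℕ):ℝ)+1)/n := by
        rw [hhiH] at h2
        exact lt_of_lt_of_le h2 (min_le_left _ _)
      apply hji
      have h1' : ((j:ℕ):ℝ) < ((i:ℕ):ℝ) + 1 := by
        rw [div_le_iff₀ hn0] at hjl
        exact lt_of_le_of_lt hjl hmgt
      have h2' : ((i:ℕ):ℝ) < ((j:ℕ):ℝ) + 1 := by
        rw [lt_div_iff₀ hn0] at hju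
        exact lt_of_le_of_lt hmle hju
      have e1 : (j:ℕ) < (i:ℕ) + 1 := by exact_mod_cast h1'
      have e2 : (i:ℕ) < (j:ℕ) + 1 := by exact_mod_cast h2'
      exact Fin.ext (by omega)
    · intro h; exact absurd (Finset.mem_univ i) h
  -- sum of lengths = b - a
  have hsum : ∑ i : Fin n, (hi i - lo i) = b - a := by
    set F : ℝ → ℝ := fun t => min b (max a t) with hF
    have step : ∀ i : Fin n, hi i - lo i
        = F ((((π i : ℕ):ℝ)+1)/n) - F (((π i : ℕ):ℝ)/n) := by
      intro i
      have hH1 : H i ≤ 1 := le_trans (min_le_left _ _) (hcell_up i)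
      have step1 : hi i - lo i = max 0 (H i - L i) := by
        simp only [hhi, hlo, min_def, max_def]
        split_ifs <;> linarith
      have hB : ((((i:ℕ):ℝ))+1)/n + c i = (((π i : ℕ):ℝ)+1)/n := by
        simp only [hc]; field_simp; try ring
      have hA : (((i:ℕ):ℝ))/n + c i = ((π i : ℕ):ℝ)/n := by
        simp only [hc]; field_simp; try ring
      have emin : H i = min ((((π i : ℕ):ℝ)+1)/n) b - c i := by
        rw [← hB]
        simp only [hH]
        rcases le_total ((((i:ℕ):ℝ)+1)/n) (b - c i) with h | h
        · rw [min_eq_left h, min_eq_left (by linarith)]; try ring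
        · rw [min_eq_right h, min_eq_right (by linarith)]; try ring
      have emax : L i = max (((π i : ℕ):ℝ)/n) a - c i := by
        rw [← hA]
        simp only [hL]
        rcases le_total (((i:ℕ):ℝ)/n) (a - c i) with h | h
        · rw [max_eq_right h, max_eq_right (by linarith)]; try ring
        · rw [max_eq_left h, max_eq_left (by linarith)]; try ring
      have hABle : ((π i : ℕ):ℝ)/n ≤ (((π i : ℕ):ℝ)+1)/n := by
        rw [div_le_div_iff₀ hn0 hn0]; nlinarith
      have : H i - L i = min ((((π i : ℕ):ℝ)+1)/n) b - max (((π i : ℕ):ℝ)/n) a := by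
        rw [emin, emax]; ring
      rw [step1, this, clamp_ident a b _ _ hab hABle]
    rw [Finset.sum_congr rfl (fun i _ => step i)]
    rw [Equiv.sum_comp π (fun j : Fin n => F ((((j : ℕ):ℝ)+1)/n) - F (((j : ℕ):ℝ)/n))]
    have : ∑ j : Fin n, (F ((((j : ℕ):ℝ)+1)/n) - F (((j : ℕ):ℝ)/n))
        = ∑ k ∈ Finset.range n, ((fun k : ℕ => F ((k:ℝ)/n)) (k+1) - (fun k : ℕ => F ((k:ℝ)/n)) k) := by
      rw [Fin.sum_univ_eq_sum_range (fun k : ℕ => F ((((k:ℕ):ℝ)+1)/n) - F (((k:ℕ):ℝ)/n)) n]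
      apply Finset.sum_congr rfl
      intro k _
      push_cast
      rfl
    rw [this, Finset.sum_range_sub (fun k : ℕ => F ((k:ℝ)/n)) n]
    simp only [Nat.cast_zero, zero_div, div_self hnne, hF]
    rw [max_eq_right (le_trans hab hb), max_eq_left ha, min_eq_left hb, min_eq_right hab]
  -- limit
  have key : (fun N : ℕ => (1/(N:ℝ)) * ∑ k ∈ Finset.range N, (Ico a b).indicator (fun _ => (1:ℝ)) (T (x k)))
      = fun N : ℕ => ∑ i : Fin n, ((1/(N:ℝ)) * ∑ k ∈ Finset.range N, (Ico (lo i) (hi i)).indicator (fun _ => (1:ℝ)) (x k)) := by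
    funext N
    rw [Finset.sum_congr rfl (fun k _ => hptwise (x k) (hx k)), Finset.sum_comm, Finset.mul_sum]
  rw [key, ← hsum]
  exact tendsto_finset_sum Finset.univ
    (fun i _ => hud (lo i) (hi i) (hlo0 i) (hlohi i) (hhi1 i))
end

section
/- Let 0 = s_0 < s_1 < … < s_n = 1 and 0 = t_0 < t_1 < … < t_m = 1 be rational numbers, and let f : [0,1)² → ℝ be constant on each rectangle [s_i, s_{i+1}) × [t_j, t_{j+1}), i = 0,…,n−1, j = 0,…,m−1. Then the supremum over all copula measures μ of ∫_{[0,1)²} f dμ is attained, i.e., there exists a copula measure μ* with ∫_{[0,1)²} f dμ* = sup over copula measures μ of ∫_{[0,1)²} f dμ. -/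
open MeasureTheory Set

namespace Stmt16Aux

/-- monotonicity of the partition points -/
lemma part_mono' {n : ℕ} {s : ℕ → ℝ} (hsmono : ∀ i < n, s i < s (i + 1)) :
    ∀ i j, i ≤ j → j ≤ n → s i ≤ s j := by
  intro i j hij hjn
  induction j with
  | zero => simp_all
  | succ k ih =>
    rcases Nat.lt_or_ge i (k+1) with h | h
    · exact le_trans (ih (Nat.lt_succ_iff.mp h) (le_trans (Nat.le_succ k) hjn))
        (le_of_lt (hsmono k (Nat.lt_of_succ_le hjn)))
    · have : i = k + 1 := le_antisymm hij h
      simp [this]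

/-- covering: every point of `[s 0, s n)` is in some cell -/
lemma part_cover' {n : ℕ} {s : ℕ → ℝ} (hsmono : ∀ i < n, s i < s (i + 1)) :
    ∀ x, s 0 ≤ x → x < s n → ∃ i < n, s i ≤ x ∧ x < s (i + 1) := by
  induction n with
  | zero => intro x h1 h2; exact absurd (lt_of_le_of_lt h1 h2) (lt_irrefl _)
  | succ k ih =>
    intro x h1 h2
    rcases le_or_gt (s k) x with h | h
    · exact ⟨k, Nat.lt_succ_self k, h, h2⟩
    · obtain ⟨i, hi, h3, h4⟩ := ih (fun i hi => hsmono i (hi.trans (Nat.lt_succ_self k))) x h1 h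
      exact ⟨i, hi.trans (Nat.lt_succ_self k), h3, h4⟩

lemma part_disj' {n : ℕ} {s : ℕ → ℝ} (hsmono : ∀ i < n, s i < s (i + 1)) :
    Pairwise (Function.onFun Disjoint (fun i : Fin n => Ico (s (i : ℕ)) (s ((i : ℕ) + 1)))) := by
  have key : ∀ i j : Fin n, (i : ℕ) < (j : ℕ) →
      Disjoint (Ico (s (i : ℕ)) (s ((i : ℕ) + 1))) (Ico (s (j : ℕ)) (s ((j : ℕ) + 1))) := by
    intro i j hij
    apply Set.Ico_disjoint_Ico.mpr
    have h1 : s ((i : ℕ) + 1) ≤ s (j : ℕ) :=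
      part_mono' hsmono _ _ hij (le_of_lt j.isLt)
    calc min (s ((i:ℕ)+1)) (s ((j:ℕ)+1)) ≤ s ((i:ℕ)+1) := min_le_left _ _
      _ ≤ max (s (i:ℕ)) (s (j:ℕ)) := h1.trans (le_max_right _ _)
  intro i j hij
  rcases Nat.lt_or_ge (i : ℕ) (j : ℕ) with h | h
  · exact key i j h
  · have : (j : ℕ) < (i : ℕ) := lt_of_le_of_ne h (fun hc => hij (Fin.ext hc.symm))
    exact (key j i this).symm

lemma part_union' {n : ℕ} {s : ℕ → ℝ} (hs0 : s 0 = 0) (hsn : s n = 1)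
    (hsmono : ∀ i < n, s i < s (i + 1)) :
    (⋃ i : Fin n, Ico (s (i : ℕ)) (s ((i : ℕ) + 1))) = Ico (0:ℝ) 1 := by
  ext x
  simp only [mem_iUnion, mem_Ico]
  constructor
  · rintro ⟨i, h1, h2⟩
    refine ⟨le_trans (by rw [← hs0]) (le_trans (part_mono' hsmono 0 i (Nat.zero_le _) (le_of_lt i.isLt)) h1), ?_⟩
    calc x < s ((i:ℕ)+1) := h2
      _ ≤ s n := part_mono' hsmono _ _ i.isLt le_rfl
      _ = 1 := hsn
  · rintro ⟨h1, h2⟩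
    obtain ⟨i, hi, h3, h4⟩ := part_cover' hsmono x (by rw [hs0]; exact h1) (by rw [hsn]; exact h2)
    exact ⟨⟨i, hi⟩, h3, h4⟩

lemma part_sum' {n : ℕ} {s : ℕ → ℝ} (hs0 : s 0 = 0) (hsn : s n = 1) :
    ∑ i : Fin n, (s ((i : ℕ) + 1) - s (i : ℕ)) = 1 := by
  rw [Fin.sum_univ_eq_sum_range (fun i => s (i + 1) - s i), Finset.sum_range_sub, hs0, hsn, sub_zero]



/-- the cell of the grid -/
def cell (s t : ℕ → ℝ) (i j : ℕ) : Set (ℝ × ℝ) :=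
  Ico (s i) (s (i+1)) ×ˢ Ico (t j) (t (j+1))

lemma cell_meas (s t : ℕ → ℝ) (i j : ℕ) : MeasurableSet (cell s t i j) :=
  measurableSet_Ico.prod measurableSet_Ico

section Main

variable {n m : ℕ} {s t : ℕ → ℝ}





variable (hs0 : s 0 = 0) (hsn : s n = 1) (ht0 : t 0 = 0) (htm : t m = 1)
  (hsmono : ∀ i < n, s i < s (i + 1)) (htmono : ∀ j < m, t j < t (j + 1))

include hsmono htmono in
lemma cell_disjoint :
    Pairwise (Function.onFun Disjoint
      (fun p : Fin n × Fin m => cell s t (p.1 : ℕ) (p.2 : ℕ))) := by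
  intro p q hpq
  rcases eq_or_ne p.1 q.1 with h1 | h1
  · have h2 : p.2 ≠ q.2 := fun h2 => hpq (Prod.ext h1 h2)
    exact Set.Disjoint.set_prod_right (part_disj' htmono h2) _ _
  · exact Set.Disjoint.set_prod_left (part_disj' hsmono h1) _ _

include hsmono in
lemma cellA_subset (i : Fin n) (hs0 : s 0 = 0) (hsn : s n = 1) :
    Ico (s (i : ℕ)) (s ((i : ℕ) + 1)) ⊆ Ico (0:ℝ) 1 :=
  Set.Ico_subset_Ico (by rw [← hs0]; exact part_mono' hsmono 0 i (Nat.zero_le _) i.isLt.le)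
    (by rw [← hsn]; exact part_mono' hsmono _ n i.isLt le_rfl)

/-- a copula measure is a.e. supported on the unit square -/
lemma copula_ae_sq {ν : Measure (ℝ × ℝ)} (hν : IsCopulaMeasure ν) :
    ∀ᵐ x ∂ν, x ∈ Ico (0:ℝ) 1 ×ˢ Ico (0:ℝ) 1 := by
  obtain ⟨hprob, hfst, hsnd⟩ := hν
  have h1 : ν (Prod.fst ⁻¹' Ico (0:ℝ) 1) = 1 := by
    rw [← Measure.map_apply measurable_fst measurableSet_Ico, hfst,
      Measure.restrict_apply measurableSet_Ico, Set.inter_self, Real.volume_Ico]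
    norm_num
  have h2 : ν (Prod.snd ⁻¹' Ico (0:ℝ) 1) = 1 := by
    rw [← Measure.map_apply measurable_snd measurableSet_Ico, hsnd,
      Measure.restrict_apply measurableSet_Ico, Set.inter_self, Real.volume_Ico]
    norm_num
  have h1' : ν (Prod.fst ⁻¹' Ico (0:ℝ) 1)ᶜ = 0 :=
    (prob_compl_eq_zero_iff (measurable_fst measurableSet_Ico)).mpr h1
  have h2' : ν (Prod.snd ⁻¹' Ico (0:ℝ) 1)ᶜ = 0 :=
    (prob_compl_eq_zero_iff (measurable_snd measurableSet_Ico)).mpr h2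
  rw [Set.prod_eq]
  have : ν (Prod.fst ⁻¹' Ico (0:ℝ) 1 ∩ Prod.snd ⁻¹' Ico (0:ℝ) 1)ᶜ = 0 := by
    rw [Set.compl_inter]
    exact measure_union_null h1' h2'
  exact mem_ae_iff.mpr this

include hsmono htmono hs0 hsn ht0 htm in
lemma copula_integral {ν : Measure (ℝ × ℝ)} (hν : IsCopulaMeasure ν)
    (f : ℝ × ℝ → ℝ)
    (hconst : ∀ i < n, ∀ j < m, ∀ p ∈ Ico (s i) (s (i + 1)) ×ˢ Ico (t j) (t (j + 1)),
      ∀ q ∈ Ico (s i) (s (i + 1)) ×ˢ Ico (t j) (t (j + 1)), f p = f q) :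
    ∫ p, f p ∂ν =
      ∑ p : Fin n × Fin m, (ν (cell s t (p.1 : ℕ) (p.2 : ℕ))).toReal * f (s (p.1 : ℕ), t (p.2 : ℕ)) := by
  have hprob := hν.1
  set g : ℝ × ℝ → ℝ := fun x =>
    ∑ p : Fin n × Fin m, (cell s t (p.1 : ℕ) (p.2 : ℕ)).indicator
      (fun _ => f (s (p.1 : ℕ), t (p.2 : ℕ))) x with hg
  have hfg : f =ᵐ[ν] g := by
    filter_upwards [copula_ae_sq hν] with x hx
    obtain ⟨hx1, hx2⟩ := hx
    obtain ⟨i, hi, hi1, hi2⟩ := part_cover' hsmono x.1 (by rw [hs0]; exact hx1.1)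
      (by rw [hsn]; exact hx1.2)
    obtain ⟨j, hj, hj1, hj2⟩ := part_cover' htmono x.2 (by rw [ht0]; exact hx2.1)
      (by rw [htm]; exact hx2.2)
    set q : Fin n × Fin m := (⟨i, hi⟩, ⟨j, hj⟩) with hq
    have hxq : x ∈ cell s t i j := ⟨⟨hi1, hi2⟩, ⟨hj1, hj2⟩⟩
    have hstq : (s i, t j) ∈ cell s t i j :=
      ⟨⟨le_refl _, hsmono i hi⟩, ⟨le_refl _, htmono j hj⟩⟩
    have hgx : g x = f (s i, t j) := by
      have hrfl : g x = ∑ p : Fin n × Fin m, (cell s t (p.1 : ℕ) (p.2 : ℕ)).indicator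
          (fun _ => f (s (p.1 : ℕ), t (p.2 : ℕ))) x := rfl
      rw [hrfl, Finset.sum_eq_single_of_mem q (Finset.mem_univ q)]
      · exact Set.indicator_of_mem hxq _
      · intro p _ hpq
        apply Set.indicator_of_notMem
        intro hxp
        exact (cell_disjoint hsmono htmono hpq).ne_of_mem hxp hxq rfl
    rw [hgx]
    exact hconst i hi j hj x hxq (s i, t j) hstq
  rw [integral_congr_ae hfg, hg]
  rw [integral_finset_sum _ (fun p _ =>
    (integrable_const (f (s (p.1 : ℕ), t (p.2 : ℕ)))).indicator
      (cell_meas s t (p.1 : ℕ) (p.2 : ℕ)))]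
  refine Finset.sum_congr rfl fun p _ => ?_
  rw [integral_indicator_const _ (cell_meas s t (p.1 : ℕ) (p.2 : ℕ)), smul_eq_mul]
  rfl

include hsmono htmono hs0 hsn ht0 htm in
lemma copula_row {ν : Measure (ℝ × ℝ)} (hν : IsCopulaMeasure ν) (i : Fin n) :
    ∑ j : Fin m, (ν (cell s t (i : ℕ) (j : ℕ))).toReal = s ((i : ℕ) + 1) - s (i : ℕ) := by
  have hprob := hν.1
  have key : ∑ j : Fin m, ν (cell s t (i : ℕ) (j : ℕ)) =
      ENNReal.ofReal (s ((i : ℕ) + 1) - s (i : ℕ)) := by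
    have hdisj : Pairwise (Function.onFun Disjoint
        (fun j : Fin m => cell s t (i : ℕ) (j : ℕ))) := by
      intro j j' hjj'
      exact Set.Disjoint.set_prod_right (part_disj' htmono hjj') _ _
    have hu : (⋃ j : Fin m, cell s t (i : ℕ) (j : ℕ)) =
        Ico (s (i : ℕ)) (s ((i : ℕ) + 1)) ×ˢ Ico (0:ℝ) 1 := by
      simp only [cell]
      rw [← Set.prod_iUnion, part_union' ht0 htm htmono]
    have := measure_iUnion (μ := ν) hdisj (fun j => cell_meas s t _ _)
    rw [tsum_fintype] at this
    rw [← this, hu, Set.prod_eq]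
    have h2' : ν (Prod.snd ⁻¹' Ico (0:ℝ) 1)ᶜ = 0 := by
      apply (prob_compl_eq_zero_iff (measurable_snd measurableSet_Ico)).mpr
      rw [← Measure.map_apply measurable_snd measurableSet_Ico, hν.2.2,
        Measure.restrict_apply measurableSet_Ico, Set.inter_self, Real.volume_Ico]
      norm_num
    rw [measure_inter_conull h2',
      ← Measure.map_apply measurable_fst measurableSet_Ico, hν.2.1,
      Measure.restrict_apply measurableSet_Ico,
      Set.inter_eq_self_of_subset_left (cellA_subset hsmono i hs0 hsn), Real.volume_Ico]
  rw [← ENNReal.toReal_ofReal (sub_nonneg.mpr (part_mono' hsmono _ _ (Nat.le_succ _) i.isLt)),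
    ← key, ENNReal.toReal_sum (fun j _ => measure_ne_top ν _)]

include hsmono htmono hs0 hsn ht0 htm in
lemma copula_col {ν : Measure (ℝ × ℝ)} (hν : IsCopulaMeasure ν) (j : Fin m) :
    ∑ i : Fin n, (ν (cell s t (i : ℕ) (j : ℕ))).toReal = t ((j : ℕ) + 1) - t (j : ℕ) := by
  have hprob := hν.1
  have key : ∑ i : Fin n, ν (cell s t (i : ℕ) (j : ℕ)) =
      ENNReal.ofReal (t ((j : ℕ) + 1) - t (j : ℕ)) := by
    have hdisj : Pairwise (Function.onFun Disjoint
        (fun i : Fin n => cell s t (i : ℕ) (j : ℕ))) := by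
      intro i i' hii'
      exact Set.Disjoint.set_prod_left (part_disj' hsmono hii') _ _
    have hu : (⋃ i : Fin n, cell s t (i : ℕ) (j : ℕ)) =
        Ico (0:ℝ) 1 ×ˢ Ico (t (j : ℕ)) (t ((j : ℕ) + 1)) := by
      simp only [cell]
      rw [← Set.iUnion_prod_const, part_union' hs0 hsn hsmono]
    have h := measure_iUnion (μ := ν) hdisj (fun i => cell_meas s t _ _)
    rw [tsum_fintype] at h
    rw [← h, hu, Set.prod_eq]
    have h1' : ν (Prod.fst ⁻¹' Ico (0:ℝ) 1)ᶜ = 0 := by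
      apply (prob_compl_eq_zero_iff (measurable_fst measurableSet_Ico)).mpr
      rw [← Measure.map_apply measurable_fst measurableSet_Ico, hν.2.1,
        Measure.restrict_apply measurableSet_Ico, Set.inter_self, Real.volume_Ico]
      norm_num
    rw [Set.inter_comm, measure_inter_conull h1',
      ← Measure.map_apply measurable_snd measurableSet_Ico, hν.2.2,
      Measure.restrict_apply measurableSet_Ico,
      Set.inter_eq_self_of_subset_left (cellA_subset htmono j ht0 htm), Real.volume_Ico]
  rw [← ENNReal.toReal_ofReal (sub_nonneg.mpr (part_mono' htmono _ _ (Nat.le_succ _) j.isLt)),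
    ← key, ENNReal.toReal_sum (fun i _ => measure_ne_top ν _)]

/-- the copula measure associated to a transportation matrix -/
noncomputable def cop (s t : ℕ → ℝ) (n m : ℕ) (c : Fin n × Fin m → ℝ) : Measure (ℝ × ℝ) :=
  ∑ p : Fin n × Fin m,
    (ENNReal.ofReal (c p / ((s ((p.1 : ℕ) + 1) - s (p.1 : ℕ)) * (t ((p.2 : ℕ) + 1) - t (p.2 : ℕ))))) •
      ((volume.restrict (Ico (s (p.1 : ℕ)) (s ((p.1 : ℕ) + 1)))).prod
        (volume.restrict (Ico (t (p.2 : ℕ)) (t ((p.2 : ℕ) + 1)))))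

lemma map_finset_sum {ι : Type*} (I : Finset ι) (μ : ι → Measure (ℝ × ℝ))
    {g : ℝ × ℝ → ℝ} (hg : Measurable g) :
    (∑ i ∈ I, μ i).map g = ∑ i ∈ I, (μ i).map g := by
  classical
  induction I using Finset.induction_on with
  | empty => simp [Measure.map_zero]
  | insert _ _ hx ih =>
    rw [Finset.sum_insert hx, Finset.sum_insert hx, Measure.map_add _ _ hg, ih]

include hsmono htmono in
lemma cop_apply_cell {c : Fin n × Fin m → ℝ} (hc : ∀ p, 0 ≤ c p) (q : Fin n × Fin m) :
    cop s t n m c (cell s t (q.1 : ℕ) (q.2 : ℕ)) = ENNReal.ofReal (c q) := by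
  have hds : 0 < s ((q.1:ℕ)+1) - s (q.1:ℕ) := sub_pos.mpr (hsmono _ q.1.isLt)
  have hdt : 0 < t ((q.2:ℕ)+1) - t (q.2:ℕ) := sub_pos.mpr (htmono _ q.2.isLt)
  rw [cop, Measure.finset_sum_apply]
  rw [Finset.sum_eq_single_of_mem q (Finset.mem_univ q)]
  · rw [Measure.smul_apply, cell, Measure.prod_restrict,
      Measure.restrict_apply (measurableSet_Ico.prod measurableSet_Ico),
      Set.inter_self, Measure.prod_prod, Real.volume_Ico, Real.volume_Ico, smul_eq_mul,
      ← ENNReal.ofReal_mul hds.le, ← ENNReal.ofReal_mul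
        (div_nonneg (hc q) (mul_pos hds hdt).le)]
    congr 1
    rw [div_mul_eq_mul_div, mul_div_assoc, div_self (mul_pos hds hdt).ne', mul_one]
  · intro p _ hpq
    rw [Measure.smul_apply, Measure.prod_restrict,
      Measure.restrict_apply (cell_meas s t (q.1 : ℕ) (q.2 : ℕ))]
    have : cell s t (q.1 : ℕ) (q.2 : ℕ) ∩ cell s t (p.1 : ℕ) (p.2 : ℕ) = ∅ :=
      Set.disjoint_iff_inter_eq_empty.mp (cell_disjoint hsmono htmono (Ne.symm hpq))
    rw [show Ico (s (p.1:ℕ)) (s ((p.1:ℕ)+1)) ×ˢ Ico (t (p.2:ℕ)) (t ((p.2:ℕ)+1)) =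
        cell s t (p.1:ℕ) (p.2:ℕ) from rfl, this]
    simp

include hs0 hsn hsmono htmono in
lemma cop_map_fst {c : Fin n × Fin m → ℝ} (hc0 : ∀ p, 0 ≤ c p)
    (hrow : ∀ i : Fin n, ∑ j : Fin m, c (i, j) = s ((i : ℕ) + 1) - s (i : ℕ)) :
    (cop s t n m c).map Prod.fst = volume.restrict (Ico (0:ℝ) 1) := by
  have hds : ∀ i : Fin n, 0 < s ((i:ℕ)+1) - s (i:ℕ) := fun i => sub_pos.mpr (hsmono _ i.isLt)
  have hdt : ∀ j : Fin m, 0 < t ((j:ℕ)+1) - t (j:ℕ) := fun j => sub_pos.mpr (htmono _ j.isLt)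
  rw [cop, map_finset_sum _ _ measurable_fst]
  have hterm : ∀ p : Fin n × Fin m,
      ((ENNReal.ofReal (c p / ((s ((p.1:ℕ)+1) - s (p.1:ℕ)) * (t ((p.2:ℕ)+1) - t (p.2:ℕ))))) •
        ((volume.restrict (Ico (s (p.1:ℕ)) (s ((p.1:ℕ)+1)))).prod
          (volume.restrict (Ico (t (p.2:ℕ)) (t ((p.2:ℕ)+1)))))).map Prod.fst
      = ENNReal.ofReal (c p / (s ((p.1:ℕ)+1) - s (p.1:ℕ))) •
          volume.restrict (Ico (s (p.1:ℕ)) (s ((p.1:ℕ)+1))) := by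
    intro p
    rw [Measure.map_smul, Measure.map_fst_prod, Measure.restrict_apply_univ, Real.volume_Ico,
      smul_smul, ← ENNReal.ofReal_mul (div_nonneg (hc0 p) (mul_pos (hds p.1) (hdt p.2)).le)]
    have h1 := (hds p.1).ne'
    have h2 := (hdt p.2).ne'
    have harith : c p / ((s ((p.1:ℕ)+1) - s (p.1:ℕ)) * (t ((p.2:ℕ)+1) - t (p.2:ℕ))) *
        (t ((p.2:ℕ)+1) - t (p.2:ℕ)) = c p / (s ((p.1:ℕ)+1) - s (p.1:ℕ)) := by
      field_simp
    rw [harith]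
  rw [Finset.sum_congr rfl (fun p _ => hterm p), Fintype.sum_prod_type]
  have hin : ∀ i : Fin n,
      (∑ j : Fin m, ENNReal.ofReal (c (i, j) / (s ((i:ℕ)+1) - s (i:ℕ))) •
        volume.restrict (Ico (s (i:ℕ)) (s ((i:ℕ)+1))))
      = volume.restrict (Ico (s (i:ℕ)) (s ((i:ℕ)+1))) := by
    intro i
    rw [← Finset.sum_smul]
    have : ∑ j : Fin m, ENNReal.ofReal (c (i, j) / (s ((i:ℕ)+1) - s (i:ℕ))) = 1 := by
      rw [← ENNReal.ofReal_sum_of_nonneg (fun j _ => div_nonneg (hc0 _) (hds i).le),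
        ← Finset.sum_div, hrow i, div_self (hds i).ne', ENNReal.ofReal_one]
    rw [this, one_smul]
  rw [Finset.sum_congr rfl (fun i _ => hin i), ← Measure.sum_fintype,
    ← Measure.restrict_iUnion (part_disj' hsmono) (fun i => measurableSet_Ico),
    part_union' hs0 hsn hsmono]

include ht0 htm hsmono htmono in
lemma cop_map_snd {c : Fin n × Fin m → ℝ} (hc0 : ∀ p, 0 ≤ c p)
    (hcol : ∀ j : Fin m, ∑ i : Fin n, c (i, j) = t ((j : ℕ) + 1) - t (j : ℕ)) :
    (cop s t n m c).map Prod.snd = volume.restrict (Ico (0:ℝ) 1) := by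
  have hds : ∀ i : Fin n, 0 < s ((i:ℕ)+1) - s (i:ℕ) := fun i => sub_pos.mpr (hsmono _ i.isLt)
  have hdt : ∀ j : Fin m, 0 < t ((j:ℕ)+1) - t (j:ℕ) := fun j => sub_pos.mpr (htmono _ j.isLt)
  rw [cop, map_finset_sum _ _ measurable_snd]
  have hterm : ∀ p : Fin n × Fin m,
      ((ENNReal.ofReal (c p / ((s ((p.1:ℕ)+1) - s (p.1:ℕ)) * (t ((p.2:ℕ)+1) - t (p.2:ℕ))))) •
        ((volume.restrict (Ico (s (p.1:ℕ)) (s ((p.1:ℕ)+1)))).prod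
          (volume.restrict (Ico (t (p.2:ℕ)) (t ((p.2:ℕ)+1)))))).map Prod.snd
      = ENNReal.ofReal (c p / (t ((p.2:ℕ)+1) - t (p.2:ℕ))) •
          volume.restrict (Ico (t (p.2:ℕ)) (t ((p.2:ℕ)+1))) := by
    intro p
    rw [Measure.map_smul, Measure.map_snd_prod, Measure.restrict_apply_univ, Real.volume_Ico,
      smul_smul, ← ENNReal.ofReal_mul (div_nonneg (hc0 p) (mul_pos (hds p.1) (hdt p.2)).le)]
    have h1 := (hds p.1).ne'
    have h2 := (hdt p.2).ne'
    have harith : c p / ((s ((p.1:ℕ)+1) - s (p.1:ℕ)) * (t ((p.2:ℕ)+1) - t (p.2:ℕ))) *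
        (s ((p.1:ℕ)+1) - s (p.1:ℕ)) = c p / (t ((p.2:ℕ)+1) - t (p.2:ℕ)) := by
      field_simp
    rw [harith]
  rw [Finset.sum_congr rfl (fun p _ => hterm p), Fintype.sum_prod_type_right]
  have hin : ∀ j : Fin m,
      (∑ i : Fin n, ENNReal.ofReal (c (i, j) / (t ((j:ℕ)+1) - t (j:ℕ))) •
        volume.restrict (Ico (t (j:ℕ)) (t ((j:ℕ)+1))))
      = volume.restrict (Ico (t (j:ℕ)) (t ((j:ℕ)+1))) := by
    intro j
    rw [← Finset.sum_smul]
    have : ∑ i : Fin n, ENNReal.ofReal (c (i, j) / (t ((j:ℕ)+1) - t (j:ℕ))) = 1 := by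
      rw [← ENNReal.ofReal_sum_of_nonneg (fun i _ => div_nonneg (hc0 _) (hdt j).le),
        ← Finset.sum_div, hcol j, div_self (hdt j).ne', ENNReal.ofReal_one]
    rw [this, one_smul]
  rw [Finset.sum_congr rfl (fun j _ => hin j), ← Measure.sum_fintype,
    ← Measure.restrict_iUnion (part_disj' htmono) (fun j => measurableSet_Ico),
    part_union' ht0 htm htmono]

include hs0 hsn ht0 htm hsmono htmono in
lemma cop_isCopula {c : Fin n × Fin m → ℝ} (hc0 : ∀ p, 0 ≤ c p)
    (hrow : ∀ i : Fin n, ∑ j : Fin m, c (i, j) = s ((i : ℕ) + 1) - s (i : ℕ))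
    (hcol : ∀ j : Fin m, ∑ i : Fin n, c (i, j) = t ((j : ℕ) + 1) - t (j : ℕ)) :
    IsCopulaMeasure (cop s t n m c) := by
  have hfst := cop_map_fst hs0 hsn hsmono htmono hc0 hrow
  have hsnd := cop_map_snd ht0 htm hsmono htmono hc0 hcol
  refine ⟨⟨?_⟩, hfst, hsnd⟩
  have h1 : (cop s t n m c).map Prod.fst univ = cop s t n m c univ := by
    rw [Measure.map_apply measurable_fst MeasurableSet.univ, Set.preimage_univ]
  rw [← h1, hfst, Measure.restrict_apply_univ, Real.volume_Ico]
  norm_num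

end Main
end Stmt16Aux

open Stmt16Aux in
theorem stmt_16 (n m : ℕ) (hn : 1 ≤ n) (hm : 1 ≤ m) (s t : ℕ → ℝ)
    (hs0 : s 0 = 0) (hsn : s n = 1) (ht0 : t 0 = 0) (htm : t m = 1)
    (hsmono : ∀ i < n, s i < s (i + 1)) (htmono : ∀ j < m, t j < t (j + 1))
    (hsrat : ∀ i ≤ n, ∃ q : ℚ, s i = (q : ℝ)) (htrat : ∀ j ≤ m, ∃ q : ℚ, t j = (q : ℝ))
    (f : ℝ × ℝ → ℝ)
    (hconst : ∀ i < n, ∀ j < m, ∀ p ∈ Ico (s i) (s (i + 1)) ×ˢ Ico (t j) (t (j + 1)),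
      ∀ q ∈ Ico (s i) (s (i + 1)) ×ˢ Ico (t j) (t (j + 1)), f p = f q) :
    ∃ μ : Measure (ℝ × ℝ), IsCopulaMeasure μ ∧
      ∫ p, f p ∂μ =
        sSup {x : ℝ | ∃ ν : Measure (ℝ × ℝ), IsCopulaMeasure ν ∧ x = ∫ p, f p ∂ν} := by
  classical
  set K : Set (Fin n × Fin m → ℝ) :=
    {c | (∀ p, 0 ≤ c p) ∧ (∀ i : Fin n, ∑ j : Fin m, c (i, j) = s ((i:ℕ) + 1) - s (i:ℕ)) ∧
      (∀ j : Fin m, ∑ i : Fin n, c (i, j) = t ((j:ℕ) + 1) - t (j:ℕ))} with hK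
  set L : (Fin n × Fin m → ℝ) → ℝ :=
    fun c => ∑ p : Fin n × Fin m, c p * f (s (p.1:ℕ), t (p.2:ℕ)) with hL
  -- K is nonempty
  have hKne : K.Nonempty := by
    refine ⟨fun p => (s ((p.1:ℕ) + 1) - s (p.1:ℕ)) * (t ((p.2:ℕ) + 1) - t (p.2:ℕ)),
      fun p => mul_nonneg (sub_nonneg.mpr (part_mono' hsmono _ _ (Nat.le_succ _) p.1.isLt))
        (sub_nonneg.mpr (part_mono' htmono _ _ (Nat.le_succ _) p.2.isLt)), ?_, ?_⟩
    · intro i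
      show ∑ j : Fin m, (s ((i:ℕ) + 1) - s (i:ℕ)) * (t ((j:ℕ) + 1) - t (j:ℕ)) =
        s ((i:ℕ) + 1) - s (i:ℕ)
      rw [← Finset.mul_sum, part_sum' ht0 htm, mul_one]
    · intro j
      show ∑ i : Fin n, (s ((i:ℕ) + 1) - s (i:ℕ)) * (t ((j:ℕ) + 1) - t (j:ℕ)) =
        t ((j:ℕ) + 1) - t (j:ℕ)
      rw [← Finset.sum_mul, part_sum' hs0 hsn, one_mul]
  -- K is compact
  have hKcl : IsClosed K := by
    rw [hK]
    simp only [Set.setOf_and]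
    refine IsClosed.inter ?_ (IsClosed.inter ?_ ?_)
    · rw [Set.setOf_forall]
      exact isClosed_iInter fun p => isClosed_le continuous_const (continuous_apply p)
    · rw [Set.setOf_forall]
      exact isClosed_iInter fun i => isClosed_eq
        (continuous_finset_sum _ fun j _ => continuous_apply (i, j)) continuous_const
    · rw [Set.setOf_forall]
      exact isClosed_iInter fun j => isClosed_eq
        (continuous_finset_sum _ fun i _ => continuous_apply (i, j)) continuous_const
  have hKsub : K ⊆ Icc (fun _ => (0:ℝ)) (fun _ => (1:ℝ)) := by
    rintro c ⟨h0, hrow, _⟩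
    refine ⟨fun p => h0 p, fun p => ?_⟩
    have h1 : c p ≤ ∑ j : Fin m, c (p.1, j) := by
      have := Finset.single_le_sum (f := fun j : Fin m => c (p.1, j))
        (fun j _ => h0 _) (Finset.mem_univ p.2)
      simpa using this
    have h2 : s ((p.1:ℕ) + 1) - s (p.1:ℕ) ≤ 1 := by
      have ha : (0:ℝ) ≤ s (p.1:ℕ) := by
        rw [← hs0]; exact part_mono' hsmono 0 _ (Nat.zero_le _) p.1.isLt.le
      have hb : s ((p.1:ℕ) + 1) ≤ 1 := by
        rw [← hsn]; exact part_mono' hsmono _ n p.1.isLt le_rfl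
      linarith
    calc c p ≤ ∑ j : Fin m, c (p.1, j) := h1
      _ = s ((p.1:ℕ) + 1) - s (p.1:ℕ) := hrow p.1
      _ ≤ 1 := h2
  have hKcomp : IsCompact K := IsCompact.of_isClosed_subset isCompact_Icc hKcl hKsub
  have hLcont : Continuous L :=
    continuous_finset_sum _ fun p _ => (continuous_apply p).mul continuous_const
  obtain ⟨cstar, hcK, hmax⟩ := hKcomp.exists_isMaxOn hKne hLcont.continuousOn
  obtain ⟨hc0, hrow, hcol⟩ := hcK
  have hcop : IsCopulaMeasure (cop s t n m cstar) :=
    cop_isCopula hs0 hsn ht0 htm hsmono htmono hc0 hrow hcol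
  have hint : ∫ p, f p ∂(cop s t n m cstar) = L cstar := by
    rw [copula_integral hs0 hsn ht0 htm hsmono htmono hcop f hconst]
    refine Finset.sum_congr rfl fun p _ => ?_
    rw [cop_apply_cell hsmono htmono hc0 p, ENNReal.toReal_ofReal (hc0 p)]
  refine ⟨cop s t n m cstar, hcop, ?_⟩
  have hgr : IsGreatest {x : ℝ | ∃ ν : Measure (ℝ × ℝ), IsCopulaMeasure ν ∧ x = ∫ p, f p ∂ν}
      (∫ p, f p ∂(cop s t n m cstar)) := by
    constructor
    · exact ⟨cop s t n m cstar, hcop, rfl⟩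
    · rintro x ⟨ν, hν, rfl⟩
      rw [copula_integral hs0 hsn ht0 htm hsmono htmono hν f hconst, hint]
      have hcν : (fun p : Fin n × Fin m => (ν (cell s t (p.1:ℕ) (p.2:ℕ))).toReal) ∈ K :=
        ⟨fun p => ENNReal.toReal_nonneg,
          fun i => copula_row hs0 hsn ht0 htm hsmono htmono hν i,
          fun j => copula_col hs0 hsn ht0 htm hsmono htmono hν j⟩
      exact hmax hcν
  exact hgr.csSup_eq.symm
end
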